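/- arXiv:math/0701525 — 9 statements merged into one kernel-verified Lean document; each statement's English description precedes it below -/
import Mathlib

section
/- Let G be a locally compact group with a strongly continuous action α of G on a complex Banach space A by linear isometric isomorphisms (so each α_x : A → A is a linear isometry, α_{xy} = α_x ∘ α_y, and x ↦ α_x(a) is continuous for each a ∈ A). Let a ∈ A be a nonzero vector, and for a subset U ⊆ G let F_U(a) denote the linear span of {α_x(a) : x ∈ U}. If there exists a neighborhood U of the identity e of G such that F_U(a) is finite dimensional, then G has an open subgroup H such that F_H(a) is finite dimensional. -/
open Filter Topology
open scoped Pointwise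

/-- If `G` is a locally compact group acting strongly continuously by linear isometric
isomorphisms on a complex Banach space `A`, `a ≠ 0`, and the span of the orbit of `a` over
some neighborhood `U` of the identity is finite dimensional, then `G` has an open subgroup
`H` such that the span of the orbit of `a` over `H` is finite dimensional. -/
theorem span_orbit_finiteDimensional_of_nhds
    {G A : Type*} [Group G] [TopologicalSpace G] [IsTopologicalGroup G]
    [LocallyCompactSpace G] [T2Space G]
    [NormedAddCommGroup A] [NormedSpace ℂ A] [CompleteSpace A]
    (α : G →* (A ≃ₗᵢ[ℂ] A)) (hα : ∀ a : A, Continuous fun x : G => α x a)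
    (a : A) (ha : a ≠ 0) (U : Set G) (hU : U ∈ 𝓝 (1 : G))
    (hfin : FiniteDimensional ℂ (Submodule.span ℂ ((fun x : G => α x a) '' U))) :
    ∃ H : Subgroup G, IsOpen (H : Set G) ∧
      FiniteDimensional ℂ (Submodule.span ℂ ((fun x : G => α x a) '' (H : Set G))) := by
  classical
  set S : Set G → Submodule ℂ A := fun U' => Submodule.span ℂ ((fun x : G => α x a) '' U')
    with hSdef
  have hmono : ∀ {U1 U2 : Set G}, U1 ⊆ U2 → S U1 ≤ S U2 := fun h =>
    Submodule.span_mono (Set.image_mono h)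
  have hfd : ∀ U' : Set G, U' ⊆ U → FiniteDimensional ℂ (S U') := fun U' h =>
    Submodule.finiteDimensional_of_le (hmono h)
  -- choose a neighborhood minimizing the dimension
  set T : Set ℕ := {n : ℕ | ∃ U' ∈ 𝓝 (1 : G), U' ⊆ U ∧ Module.finrank ℂ (S U') = n} with hTdef
  have hTne : T.Nonempty := ⟨Module.finrank ℂ (S U), U, hU, subset_rfl, rfl⟩
  obtain ⟨U0, hU0n, hU0U, hU0d⟩ := Nat.sInf_mem hTne
  haveI : FiniteDimensional ℂ (S U0) := hfd _ hU0U
  have hkey : ∀ U1 ∈ 𝓝 (1 : G), U1 ⊆ U0 → S U1 = S U0 := by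
    intro U1 hU1n h1
    haveI : FiniteDimensional ℂ (S U1) := hfd _ (h1.trans hU0U)
    have hle : S U1 ≤ S U0 := hmono h1
    have hd : sInf T ≤ Module.finrank ℂ (S U1) :=
      Nat.sInf_le ⟨U1, hU1n, h1.trans hU0U, rfl⟩
    exact Submodule.eq_of_le_of_finrank_le hle (hU0d ▸ hd)
  -- a symmetric neighborhood W of 1 with W * W ⊆ U0
  obtain ⟨V, hVo, hV1, hVV⟩ := exists_open_nhds_one_mul_subset hU0n
  set W : Set G := V ∩ V⁻¹ with hWdef
  have hWn : W ∈ 𝓝 (1 : G) :=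
    (hVo.inter hVo.inv).mem_nhds ⟨hV1, by simp [hV1]⟩
  have hWsymm : ∀ x ∈ W, x⁻¹ ∈ W := by
    rintro x ⟨h1, h2⟩
    exact ⟨h2, by simpa using h1⟩
  have hWU0 : W ⊆ U0 := fun x hx => by
    have : x * 1 ∈ V * V := Set.mul_mem_mul hx.1 hV1
    simpa using hVV this
  have hxWU0 : ∀ x ∈ W, ∀ y ∈ W, x * y ∈ U0 := fun x hx y hy =>
    hVV (Set.mul_mem_mul hx.1 hy.1)
  -- the finite-dimensional space V₀
  set V₀ : Submodule ℂ A := S U0 with hV₀def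
  have hSW : S W = V₀ := hkey W hWn hWU0
  -- linear maps
  set f : G → A →ₗ[ℂ] A := fun x => ((α x).toLinearEquiv : A →ₗ[ℂ] A) with hfdef
  have hfapp : ∀ x v, f x v = α x v := fun x v => rfl
  have hfcomp : ∀ x y : G, f (x * y) = (f x).comp (f y) := by
    intro x y
    ext v
    simp [hfdef, map_mul]
  have hfone : f 1 = LinearMap.id := by
    ext v
    simp [hfdef, map_one]
  -- span of the orbit over W is mapped into V₀ by each α x, x ∈ W
  have hle : ∀ x ∈ W, V₀.map (f x) ≤ V₀ := by
    intro x hx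
    have h1 : V₀.map (f x) = ((S W).map (f x)) := by rw [hSW]
    rw [h1, hSdef]
    simp only
    rw [Submodule.map_span]
    apply Submodule.span_le.2
    rw [Set.image_image]
    rintro _ ⟨y, hy, rfl⟩
    have hxy : x * y ∈ U0 := hxWU0 x hx y hy
    have : α (x * y) a ∈ S U0 :=
      Submodule.subset_span ⟨x * y, hxy, rfl⟩
    simpa [hfapp, map_mul] using this
  have heq : ∀ x ∈ W, V₀.map (f x) = V₀ := by
    intro x hx
    refine le_antisymm (hle x hx) ?_
    have h1 : V₀.map (f x⁻¹) ≤ V₀ := hle _ (hWsymm x hx)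
    have h2 : (V₀.map (f x⁻¹)).map (f x) ≤ V₀.map (f x) :=
      Submodule.map_mono h1
    have h3 : (V₀.map (f x⁻¹)).map (f x) = V₀ := by
      rw [← Submodule.map_comp, ← hfcomp, mul_inv_cancel, hfone, Submodule.map_id]
    calc V₀ = (V₀.map (f x⁻¹)).map (f x) := h3.symm
      _ ≤ V₀.map (f x) := h2
  -- the subgroup generated by W stabilizes V₀
  refine ⟨Subgroup.closure W, ?_, ?_⟩
  · exact Subgroup.isOpen_of_mem_nhds _ (mem_of_superset hWn Subgroup.subset_closure)
  · have hstab : ∀ x ∈ Subgroup.closure W, V₀.map (f x) = V₀ := by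
      intro x hx
      induction hx using Subgroup.closure_induction with
      | mem y hy => exact heq y hy
      | one => rw [hfone, Submodule.map_id]
      | mul y z _ _ hy hz => rw [hfcomp, Submodule.map_comp, hz, hy]
      | inv y _ hy =>
        have h2 : (V₀.map (f y)).map (f y⁻¹) = V₀.map (f y⁻¹) := by rw [hy]
        rw [← h2, ← Submodule.map_comp, ← hfcomp, inv_mul_cancel, hfone, Submodule.map_id]
    have haV : a ∈ V₀ := by
      have : α (1 : G) a ∈ S U0 :=
        Submodule.subset_span ⟨1, mem_of_mem_nhds hU0n, rfl⟩
      simpa [map_one] using this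
    have hsub : S (Subgroup.closure W : Set G) ≤ V₀ := by
      apply Submodule.span_le.2
      rintro _ ⟨x, hx, rfl⟩
      have := hstab x hx
      have : α x a ∈ V₀.map (f x) := ⟨a, haV, rfl⟩
      rwa [hstab x hx] at this
    exact Submodule.finiteDimensional_of_le hsub
end

section
/- Let G be a locally compact group with a strongly continuous action α of G on a complex Banach space A by linear isometric isomorphisms, and assume that for every a ∈ A and every continuous linear functional φ on A the matrix-coefficient function x ↦ φ(α_x(a)) belongs to C₀(G) (it is continuous and vanishes at infinity). Let a ∈ A be a nonzero vector. If there exists a neighborhood U of the identity e such that F_U(a) is finite dimensional, then G has a compact open subgroup H such that F_H(a) is finite dimensional. -/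
open Filter Topology

/-- If `G` is a locally compact group acting strongly continuously by linear isometric
isomorphisms on a complex Banach space `A`, such that all matrix-coefficient functions
`x ↦ φ (α x a)` belong to `C₀(G)`, `a ≠ 0`, and the span of the orbit of `a` over some
neighborhood `U` of the identity is finite dimensional, then `G` has a compact open
subgroup `H` such that the span of the orbit of `a` over `H` is finite dimensional. -/
theorem span_orbit_finiteDimensional_compact_open
    {G A : Type*} [Group G] [TopologicalSpace G] [IsTopologicalGroup G]
    [LocallyCompactSpace G] [T2Space G]
    [NormedAddCommGroup A] [NormedSpace ℂ A] [CompleteSpace A]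
    (α : G →* (A ≃ₗᵢ[ℂ] A)) (hα : ∀ a : A, Continuous fun x : G => α x a)
    (hC0 : ∀ (b : A) (φ : A →L[ℂ] ℂ),
      Continuous (fun x : G => φ (α x b)) ∧
        Tendsto (fun x : G => φ (α x b)) (cocompact G) (𝓝 0))
    (a : A) (ha : a ≠ 0) (U : Set G) (hU : U ∈ 𝓝 (1 : G))
    (hfin : FiniteDimensional ℂ (Submodule.span ℂ ((fun x : G => α x a) '' U))) :
    ∃ H : Subgroup G, IsCompact (H : Set G) ∧ IsOpen (H : Set G) ∧
      FiniteDimensional ℂ (Submodule.span ℂ ((fun x : G => α x a) '' (H : Set G))) := by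
  set f : G → A := fun x : G => α x a with hf
  set U' : Set G := interior U with hU'def
  have hU'open : IsOpen U' := isOpen_interior
  have hU'mem : (1 : G) ∈ U' := mem_interior_iff_mem_nhds.2 hU
  set V : Submodule ℂ A := Submodule.span ℂ (f '' U') with hVdef
  have hVle : V ≤ Submodule.span ℂ (f '' U) :=
    Submodule.span_mono (Set.image_mono interior_subset)
  have hVfin : FiniteDimensional ℂ V := Submodule.finiteDimensional_of_le hVle
  have haV : a ∈ V := by
    apply Submodule.subset_span
    exact ⟨1, hU'mem, by simp [hf]⟩
  -- choose a finite linearly independent spanning set inside the orbit image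
  obtain ⟨s, hs_sub, hs_span, hs_li⟩ := exists_linearIndependent ℂ (f '' U')
  have hs_fin : s.Finite := by
    -- s is linearly independent and contained in the finite-dimensional V
    obtain ⟨t, hts⟩ := Module.finite_def.mp (inferInstance : Module.Finite ℂ V)
    have hw : Submodule.span ℂ ((↑) '' (t : Set V) : Set A) = V := by
      have := congrArg (Submodule.map V.subtype) hts
      rwa [Submodule.map_span, Submodule.map_top, Submodule.range_subtype] at this
    haveI : Finite ↥((↑) '' (t : Set V) : Set A) :=
      (Set.Finite.image _ (t.finite_toSet)).to_subtype
    have : Finite s := by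
      refine hs_li.finite_of_le_span_finite _ ((↑) '' (t : Set V) : Set A) ?_
      rw [hw, Subtype.range_coe]
      intro b hb
      show b ∈ Submodule.span ℂ (f '' U')
      rw [← hs_span]
      exact Submodule.subset_span hb
    exact Set.toFinite s
  have hs_spanV : Submodule.span ℂ s = V := hs_span
  -- choose preimages in U' for elements of s
  choose xs hxsU hxsf using fun b : s => hs_sub b.2
  -- the subgroup H
  have invmem : ∀ g : G, (∀ v ∈ V, (α g) v ∈ V) → ∀ v ∈ V, (α g⁻¹) v ∈ V := by
    intro g hg v hv
    have hmap : Submodule.map (α g).toLinearEquiv.toLinearMap V ≤ V := by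
      rintro w ⟨u, hu, rfl⟩; exact hg u hu
    have heq : Submodule.map (α g).toLinearEquiv.toLinearMap V = V :=
      Submodule.eq_of_le_of_finrank_le hmap
        (le_of_eq (LinearEquiv.finrank_map_eq (α g).toLinearEquiv V).symm)
    rw [← heq] at hv
    obtain ⟨w, hw, rfl⟩ := hv
    have : (α g⁻¹) ((α g) w) = w := by
      have h := LinearIsometryEquiv.congr_fun (congrArg α (inv_mul_cancel g)) w
      rw [map_mul, map_one] at h
      simpa [LinearIsometryEquiv.coe_mul] using h
    simpa [this] using hw
  set H : Subgroup G :=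
    { carrier := {g : G | ∀ v ∈ V, (α g) v ∈ V}
      one_mem' := by intro v hv; simpa using hv
      mul_mem' := by
        intro g h hg hh v hv
        have := hg ((α h) v) (hh v hv)
        simpa [map_mul] using this
      inv_mem' := fun {g} hg => invmem g hg } with hHdef
  have hHmem : ∀ g : G, g ∈ H ↔ ∀ v ∈ V, (α g) v ∈ V := fun g => Iff.rfl
  -- the open set W inside H
  set W : Set G := ⋂ b : s, (fun g : G => g * xs b) ⁻¹' U' with hWdef
  have hW_open : IsOpen W := by
    have : Finite s := hs_fin.to_subtype
    exact isOpen_iInter_of_finite fun b =>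
      hU'open.preimage (continuous_mul_right (xs b))
  have hW_one : (1 : G) ∈ W := by
    refine Set.mem_iInter.2 fun b => ?_
    simpa using hxsU b
  have hW_sub : W ⊆ (H : Set G) := by
    intro g hg
    rw [SetLike.mem_coe, hHmem]
    intro v hv
    rw [← hs_spanV] at hv
    have : Submodule.map (α g).toLinearEquiv.toLinearMap (Submodule.span ℂ s) ≤ V := by
      rw [Submodule.map_span]
      apply Submodule.span_le.2
      rintro w ⟨b, hb, rfl⟩
      obtain ⟨c, rfl⟩ : ∃ c : s, (c : A) = b := ⟨⟨b, hb⟩, rfl⟩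
      show (α g) (c : A) ∈ V
      rw [← hxsf c]
      have hmem : f (g * xs c) ∈ V :=
        Submodule.subset_span ⟨g * xs c, Set.mem_iInter.1 hg c, rfl⟩
      simpa [hf, map_mul, LinearIsometryEquiv.coe_mul] using hmem
    exact this ⟨v, hv, rfl⟩
  have hH_nhds : (H : Set G) ∈ 𝓝 (1 : G) :=
    mem_of_superset (hW_open.mem_nhds hW_one) hW_sub
  have hH_open : IsOpen (H : Set G) := H.isOpen_of_mem_nhds hH_nhds
  have hH_closed : IsClosed (H : Set G) := H.isClosed_of_isOpen hH_open
  -- span of orbit over H is contained in V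
  have hspanH : Submodule.span ℂ (f '' (H : Set G)) ≤ V := by
    apply Submodule.span_le.2
    rintro w ⟨g, hg, rfl⟩
    exact hg a haV
  have hfinH : FiniteDimensional ℂ (Submodule.span ℂ (f '' (H : Set G))) :=
    Submodule.finiteDimensional_of_le hspanH
  -- compactness of H
  have hH_compact : IsCompact (H : Set G) := by
    by_contra hnc
    have hFne : NeBot (cocompact G ⊓ 𝓟 (H : Set G)) := by
      rw [neBot_iff]
      intro hbot
      rw [inf_principal_eq_bot] at hbot
      obtain ⟨K, hK, hKc⟩ := mem_cocompact.1 hbot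
      have : (H : Set G) ⊆ K := by
        intro g hg
        by_contra hgK
        exact (hKc hgK) hg
      exact hnc (hK.of_isClosed_subset hH_closed this)
    set F := cocompact G ⊓ 𝓟 (H : Set G) with hFdef
    -- the sphere in V
    have : ProperSpace V := FiniteDimensional.proper ℂ V
    set K₀ : Set A := ((↑) : V → A) '' Metric.sphere (0 : V) ‖a‖ with hK₀def
    have hK₀comp : IsCompact K₀ :=
      (isCompact_sphere (0 : V) ‖a‖).image continuous_subtype_val
    have hmapsto : ∀ g ∈ (H : Set G), f g ∈ K₀ := by
      intro g hg
      refine ⟨⟨f g, hg a haV⟩, ?_, rfl⟩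
      rw [mem_sphere_zero_iff_norm]
      show ‖f g‖ = ‖a‖
      simp [hf]
    have hle : map f F ≤ 𝓟 K₀ := by
      rw [le_principal_iff, mem_map]
      exact mem_inf_of_right (fun g hg => hmapsto g hg)
    obtain ⟨v, hvK₀, hv⟩ := hK₀comp.exists_clusterPt hle
    have hv0 : v = 0 := by
      apply NormedSpace.eq_zero_of_forall_dual_eq_zero ℂ
      intro φ
      have htend : Tendsto (fun x : G => φ (f x)) F (𝓝 0) :=
        ((hC0 a φ).2).mono_left inf_le_left
      have hcl : ClusterPt (φ v) (𝓝 (0 : ℂ)) := by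
        exact hv.map φ.continuous.continuousAt (tendsto_map'_iff.2 htend)
      exact eq_of_nhds_neBot hcl
    obtain ⟨w, hw, hwv⟩ := hvK₀
    rw [mem_sphere_zero_iff_norm] at hw
    apply ha
    rw [← norm_eq_zero, ← hw]
    show ‖(w : A)‖ = 0
    rw [hwv, hv0, norm_zero]
  exact ⟨H, hH_compact, hH_open, hfinH⟩
end

section
/- Let G be a locally compact group with a strongly continuous action α of G on a complex Banach space A by linear isometric isomorphisms, such that for every a ∈ A and every continuous linear functional φ on A the function x ↦ φ(α_x(a)) belongs to C₀(G). Suppose a, a₁, …, aₙ ∈ A are nonzero elements and g, g₁, …, gₙ : G → ℂ are functions such that g(y)·α_y(a) = Σ_{i=1}^n g_i(y)·a_i for all y ∈ G. Then g has compact support, i.e., there is a compact set K ⊆ G with g(y) = 0 for y ∉ K. -/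
open Filter Topology

/-- If `G` acts strongly continuously by linear isometric isomorphisms on a complex Banach
space `A` with all matrix coefficients in `C₀(G)`, `a, aᵢ` are nonzero, and
`g y • α y a = ∑ i, gᵢ y • aᵢ` for all `y`, then `g` has compact support. -/
theorem compact_support_of_orbit_relation
    {G A : Type*} [Group G] [TopologicalSpace G] [IsTopologicalGroup G]
    [LocallyCompactSpace G] [T2Space G]
    [NormedAddCommGroup A] [NormedSpace ℂ A] [CompleteSpace A]
    (α : G →* (A ≃ₗᵢ[ℂ] A)) (hα : ∀ a : A, Continuous fun x : G => α x a)
    (hC0 : ∀ (b : A) (φ : A →L[ℂ] ℂ),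
      Continuous (fun x : G => φ (α x b)) ∧
        Tendsto (fun x : G => φ (α x b)) (cocompact G) (𝓝 0))
    (n : ℕ) (a : A) (ha : a ≠ 0) (ai : Fin n → A) (hai : ∀ i, ai i ≠ 0)
    (g : G → ℂ) (gi : Fin n → G → ℂ)
    (heq : ∀ y : G, g y • (α y a) = ∑ i, gi i y • ai i) :
    ∃ K : Set G, IsCompact K ∧ ∀ y ∉ K, g y = 0 := by
  classical
  have ha' : (0:ℝ) < ‖a‖ := norm_pos_iff.mpr ha
  set V : Submodule ℂ A := Submodule.span ℂ (Set.range ai) with hV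
  have hVfd : FiniteDimensional ℂ V :=
    FiniteDimensional.span_of_finite ℂ (Set.finite_range ai)
  set S : Set A := ((↑) '' (Metric.sphere (0:V) ‖a‖)) with hS
  have hScompact : IsCompact S :=
    (isCompact_sphere (0:V) ‖a‖).image continuous_subtype_val
  -- choose dual functionals
  have hφ : ∀ v : A, ∃ φ : A →L[ℂ] ℂ, v ∈ S → ‖a‖/2 < ‖φ v‖ := by
    intro v
    by_cases hv : v ∈ S
    · obtain ⟨w, hw, rfl⟩ := hv
      have hwnorm : ‖(w:A)‖ = ‖a‖ := by
        simpa using mem_sphere_zero_iff_norm.mp hw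
      have hwne : (w:A) ≠ 0 := by
        intro h; rw [h, norm_zero] at hwnorm; exact ha'.ne' hwnorm.symm
      obtain ⟨φ, _, hφw⟩ := exists_dual_vector ℂ (w:A) (norm_ne_zero_iff.mpr hwne)
      refine ⟨φ, fun _ => ?_⟩
      rw [hφw, RCLike.norm_ofReal, abs_of_nonneg (norm_nonneg _), hwnorm]
      linarith
    · exact ⟨0, fun h => absurd h hv⟩
  choose φv hφv using hφ
  -- finite subcover of S
  have hcover : S ⊆ ⋃ v : A, {w : A | ‖a‖/2 < ‖φv v w‖} := by
    intro v hv
    exact Set.mem_iUnion.mpr ⟨v, hφv v hv⟩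
  obtain ⟨t, ht⟩ := hScompact.elim_finite_subcover
    (fun v : A => {w : A | ‖a‖/2 < ‖φv v w‖})
    (fun v => isOpen_lt continuous_const ((φv v).continuous.norm)) hcover
  -- compact sets from C₀ condition
  have hmem : ∀ v : A, (fun x : G => φv v (α x a)) ⁻¹' Metric.ball 0 (‖a‖/2)
      ∈ cocompact G :=
    fun v => (hC0 a (φv v)).2 (Metric.ball_mem_nhds 0 (by positivity))
  choose K hKc hKs using fun v => mem_cocompact.mp (hmem v)
  refine ⟨⋃ v ∈ t, K v, t.finite_toSet.isCompact_biUnion (fun v _ => hKc v), ?_⟩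
  intro y hy
  by_contra hg
  -- α y a ∈ S
  have hmemV : α y a ∈ V := by
    have h1 : g y • α y a ∈ V := by
      rw [heq y]
      exact Submodule.sum_mem _ fun i _ =>
        Submodule.smul_mem _ _ (Submodule.subset_span ⟨i, rfl⟩)
    have h2 : (g y)⁻¹ • (g y • α y a) ∈ V := Submodule.smul_mem _ _ h1
    rwa [inv_smul_smul₀ hg] at h2
  have hnorm : ‖α y a‖ = ‖a‖ := (α y).norm_map a
  have hSmem : α y a ∈ S :=
    ⟨⟨α y a, hmemV⟩, mem_sphere_zero_iff_norm.mpr (by simp [hnorm]), rfl⟩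
  obtain ⟨v, hvt, hvU⟩ := Set.mem_iUnion₂.mp (ht hSmem)
  have hyK : y ∉ K v := fun h => hy (Set.mem_biUnion hvt h)
  have := hKs v hyK
  simp only [Set.mem_preimage, Metric.mem_ball, dist_zero_right] at this
  exact absurd hvU (not_lt.mpr (le_of_lt this)).elim
end

section
/- Let G be a locally compact group. Suppose f, g, f₁, …, fₙ, g₁, …, gₙ ∈ C₀(G) are functions with f and g nonzero such that f(xy)·g(y) = Σ_{i=1}^n f_i(x)·g_i(y) for all x, y ∈ G. Then g has compact support, i.e., g ∈ C_c(G). -/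
open Filter Topology

-- separating finite set of points for a finite-dimensional space of functions
lemma sep_aux {G : Type*} (k : ℕ) :
    ∀ (W : Submodule ℂ (G → ℂ)), FiniteDimensional ℂ W → Module.finrank ℂ W ≤ k →
      ∃ T : Finset G, ∀ u ∈ W, (∀ x ∈ T, u x = 0) → u = 0 := by
  induction k with
  | zero =>
    intro W hW h0
    haveI := hW
    have hbot : W = ⊥ := Submodule.finrank_eq_zero.mp (Nat.le_zero.mp h0)
    exact ⟨∅, fun u hu _ => by simpa [hbot] using hu⟩
  | succ k ih =>
    intro W hW hk
    classical
    haveI := hW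
    by_cases hbot : W = ⊥
    · exact ⟨∅, fun u hu _ => by simpa [hbot] using hu⟩
    · obtain ⟨u, hu, hune⟩ := (Submodule.ne_bot_iff W).mp hbot
      obtain ⟨x₀, hx₀⟩ := Function.ne_iff.mp hune
      set W' : Submodule ℂ (G → ℂ) := W ⊓ LinearMap.ker (LinearMap.proj (R := ℂ) (φ := fun _ : G => ℂ) x₀) with hW'
      have hlt : W' < W := lt_of_le_of_ne inf_le_left (by
        intro h
        have : u ∈ W' := h ▸ hu
        exact hx₀ this.2)
      haveI : FiniteDimensional ℂ W' := Submodule.finiteDimensional_of_le hlt.le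
      have hrank : Module.finrank ℂ W' ≤ k := by
        have := Submodule.finrank_lt_finrank_of_lt hlt
        omega
      obtain ⟨T', hT'⟩ := ih W' inferInstance hrank
      refine ⟨insert x₀ T', fun v hv hvz => ?_⟩
      have hv' : v ∈ W' := ⟨hv, by simpa using hvz x₀ (Finset.mem_insert_self _ _)⟩
      exact hT' v hv' fun x hx => hvz x (Finset.mem_insert_of_mem hx)

lemma decomp {G : Type*} (W : Submodule ℂ (G → ℂ)) [FiniteDimensional ℂ W] :
    ∃ (T : Finset G) (c : T → (G → ℂ)), (∀ j, c j ∈ W) ∧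
      ∀ u ∈ W, ∀ z, u z = ∑ j : T, u (j : G) * c j z := by
  classical
  obtain ⟨T, hT⟩ := sep_aux (Module.finrank ℂ W) W inferInstance le_rfl
  set ev : W →ₗ[ℂ] (T → ℂ) :=
    LinearMap.pi (fun j => (LinearMap.proj (R := ℂ) (φ := fun _ : G => ℂ) (j : G)).comp W.subtype) with hev
  have hker : LinearMap.ker ev = ⊥ := by
    rw [LinearMap.ker_eq_bot']
    intro w hw
    apply Subtype.ext
    apply hT w w.2
    intro x hx
    exact congrFun hw ⟨x, hx⟩
  obtain ⟨L, hL⟩ := ev.exists_leftInverse_of_injective hker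
  refine ⟨T, fun j => (L (fun i => if j = i then 1 else 0) : G → ℂ), fun j => (L _).2, ?_⟩
  intro u hu z
  have h1 : L (ev ⟨u, hu⟩) = ⟨u, hu⟩ := by
    rw [← LinearMap.comp_apply, hL]; rfl
  have h2 : L (ev ⟨u, hu⟩) = ∑ j : T, (ev ⟨u, hu⟩) j • L (fun i => if j = i then 1 else 0) :=
    LinearMap.pi_apply_eq_sum_univ L (ev ⟨u, hu⟩)
  have h3 := h1.symm.trans h2
  have h4 := congrArg (fun w : W => (w : G → ℂ) z) h3
  simpa [ev, smul_eq_mul] using h4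

lemma bdd_of_c0 {G : Type*} [TopologicalSpace G] (φ : G → ℂ) (hc : Continuous φ)
    (h0 : Tendsto φ (cocompact G) (𝓝 0)) : ∃ M, ∀ x, ‖φ x‖ ≤ M := by
  have h1 : φ ⁻¹' Metric.ball 0 1 ∈ cocompact G := h0 (Metric.ball_mem_nhds 0 one_pos)
  obtain ⟨K, hK, hKs⟩ := mem_cocompact.mp h1
  obtain ⟨C, hC⟩ := hK.exists_bound_of_continuousOn hc.continuousOn
  refine ⟨max C 1, fun x => ?_⟩
  by_cases hx : x ∈ K
  · exact le_trans (hC x hx) (le_max_left _ _)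
  · have := hKs hx
    simp only [Set.mem_preimage, Metric.mem_ball, dist_zero_right] at this
    exact le_trans this.le (le_max_right _ _)

/-- If `f, g, fᵢ, gᵢ ∈ C₀(G)` with `f, g` nonzero satisfy
`f (x * y) * g y = ∑ i, fᵢ x * gᵢ y` for all `x, y`, then `g` has compact support,
i.e. `g ∈ C_c(G)`. -/
theorem hasCompactSupport_of_factorization
    {G : Type*} [Group G] [TopologicalSpace G] [IsTopologicalGroup G]
    [LocallyCompactSpace G] [T2Space G]
    (n : ℕ) (f g : G → ℂ) (fi gi : Fin n → G → ℂ)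
    (hf : Continuous f ∧ Tendsto f (cocompact G) (𝓝 0)) (hf0 : f ≠ 0)
    (hg : Continuous g ∧ Tendsto g (cocompact G) (𝓝 0)) (hg0 : g ≠ 0)
    (hfi : ∀ i, Continuous (fi i) ∧ Tendsto (fi i) (cocompact G) (𝓝 0))
    (hgi : ∀ i, Continuous (gi i) ∧ Tendsto (gi i) (cocompact G) (𝓝 0))
    (heq : ∀ x y : G, f (x * y) * g y = ∑ i, fi i x * gi i y) :
    HasCompactSupport g := by
  classical
  set W : Submodule ℂ (G → ℂ) := Submodule.span ℂ (Set.range fi) with hWdef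
  haveI : FiniteDimensional ℂ W := FiniteDimensional.span_of_finite ℂ (Set.finite_range fi)
  obtain ⟨T, c, hcW, hdec⟩ := decomp W
  -- bounds on c j
  have hbdd : ∀ u ∈ W, ∃ M, ∀ x, ‖u x‖ ≤ M := by
    intro u hu
    induction hu using Submodule.span_induction with
    | mem v hv =>
      obtain ⟨i, rfl⟩ := hv
      exact bdd_of_c0 _ (hfi i).1 (hfi i).2
    | zero => exact ⟨0, fun x => by simp⟩
    | add v w _ _ hv hw =>
      obtain ⟨Mv, hMv⟩ := hv
      obtain ⟨Mw, hMw⟩ := hw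
      exact ⟨Mv + Mw, fun x => (norm_add_le _ _).trans (add_le_add (hMv x) (hMw x))⟩
    | smul a v _ hv =>
      obtain ⟨Mv, hMv⟩ := hv
      exact ⟨‖a‖ * Mv, fun x => by
        rw [Pi.smul_apply, norm_smul]
        exact mul_le_mul_of_nonneg_left (hMv x) (norm_nonneg a)⟩
  choose M hM using fun j : T => hbdd (c j) (hcW j)
  -- nonvanishing point of f
  obtain ⟨x₀, hx₀⟩ := Function.ne_iff.mp hf0
  have hx₀'' : f x₀ ≠ 0 := by simpa using hx₀
  have hx₀' : (0 : ℝ) < ‖f x₀‖ := by simpa [norm_pos_iff] using hx₀''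
  -- the sum tends to 0 at infinity
  have htend : Tendsto (fun y : G => ∑ j : T, ‖f ((j : G) * y)‖ * M j) (cocompact G) (𝓝 0) := by
    have : (0 : ℝ) = ∑ j : T, 0 := by simp
    rw [this]
    refine tendsto_finset_sum _ fun j _ => ?_
    have hmap : Tendsto (fun y : G => (j : G) * y) (cocompact G) (cocompact G) := by
      have := (Homeomorph.mulLeft (j : G)).map_cocompact
      exact le_of_eq this
    have h1 : Tendsto (fun y : G => f ((j : G) * y)) (cocompact G) (𝓝 0) := hf.2.comp hmap
    simpa using (h1.norm.mul_const (M j))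
  have hev : ∀ᶠ y in cocompact G, (∑ j : T, ‖f ((j : G) * y)‖ * M j) < ‖f x₀‖ :=
    htend (Iio_mem_nhds hx₀')
  have hgzero : ∀ᶠ y in cocompact G, g y = 0 := by
    filter_upwards [hev] with y hy
    by_contra hgy
    -- the translate u lies in W
    set u : G → ℂ := fun x => f (x * y) with hu
    have huW : u ∈ W := by
      have hrepr : u = ∑ i, (gi i y / g y) • fi i := by
        funext x
        simp only [hu, Finset.sum_apply, Pi.smul_apply, smul_eq_mul]
        have h1 : ∑ i, gi i y / g y * fi i x = (∑ i, fi i x * gi i y) / g y := by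
          rw [Finset.sum_div]
          exact Finset.sum_congr rfl fun i _ => by ring
        rw [h1, ← heq x y, mul_div_cancel_right₀ _ hgy]
      rw [hrepr]
      exact Submodule.sum_mem _ fun i _ =>
        Submodule.smul_mem _ _ (Submodule.subset_span ⟨i, rfl⟩)
    have hid : f x₀ = ∑ j : T, f ((j : G) * y) * c j (x₀ * y⁻¹) := by
      have h1 := hdec u huW (x₀ * y⁻¹)
      have h2 : u (x₀ * y⁻¹) = f x₀ := by simp [hu, inv_mul_cancel_right]
      rw [h2] at h1
      exact h1
    have hle : ‖f x₀‖ ≤ ∑ j : T, ‖f ((j : G) * y)‖ * M j := by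
      rw [hid]
      refine (norm_sum_le _ _).trans (Finset.sum_le_sum fun j _ => ?_)
      rw [norm_mul]
      exact mul_le_mul_of_nonneg_left (hM j _) (norm_nonneg _)
    linarith
  obtain ⟨K, hK, hKs⟩ := mem_cocompact.mp hgzero
  apply HasCompactSupport.intro hK
  intro x hx
  exact hKs hx
end

section
/- Let G be a group containing a subgroup H, let A be a complex vector space, and suppose g, g₁, …, gₙ : G → A and f₁, …, fₙ : G → ℂ are functions such that χ_H(xy)·g(y) = Σ_{i=1}^n f_i(x)·g_i(y) for all x, y ∈ G, where χ_H is the indicator function of H. Then g has finite support in G/H: there is a finite set F ⊆ G such that g(y) = 0 whenever y ∉ FH = {zh : z ∈ F, h ∈ H}. -/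
open Pointwise

open scoped Classical in
/-- If `H` is a subgroup of a group `G`, `A` a complex vector space, and
`χ_H (x * y) • g y = ∑ i, fᵢ x • gᵢ y` for all `x, y ∈ G`, then `g` has finite support
in `G/H`: there is a finite set `F` such that `g y = 0` whenever `y ∉ F * H`. -/
theorem finite_support_in_quotient_of_indicator_relation
    {G A : Type*} [Group G] [AddCommGroup A] [Module ℂ A]
    (H : Subgroup G) (n : ℕ) (g : G → A) (gi : Fin n → G → A) (fi : Fin n → G → ℂ)
    (heq : ∀ x y : G,
      (if x * y ∈ H then (1 : ℂ) else 0) • g y = ∑ i, fi i x • gi i y) :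
    ∃ F : Finset G, ∀ y : G, y ∉ (F : Set G) * (H : Set G) → g y = 0 := by
  classical
  set S : Set (G ⧸ H) := QuotientGroup.mk '' {y | g y ≠ 0} with hS
  have hSfin : S.Finite := by
    by_contra hinf
    rw [← Set.not_infinite, not_not] at hinf
    obtain ⟨t, hts, htcard⟩ := hinf.exists_subset_card_eq (n + 1)
    have e := t.equivFinOfCardEq htcard
    -- choose representatives
    have hmem : ∀ j : Fin (n + 1), ∃ y : G, g y ≠ 0 ∧
        (QuotientGroup.mk y : G ⧸ H) = (e.symm j : G ⧸ H) := by
      intro j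
      have : ((e.symm j : G ⧸ H)) ∈ S := hts (e.symm j).2
      obtain ⟨y, hy, hy'⟩ := this
      exact ⟨y, hy, hy'⟩
    choose y hy hmk using hmem
    have hinj : ∀ j k : Fin (n + 1),
        (QuotientGroup.mk (y j) : G ⧸ H) = QuotientGroup.mk (y k) → j = k := by
      intro j k h
      rw [hmk j, hmk k] at h
      exact e.symm.injective (Subtype.ext h)
    -- vectors in ℂ^n
    set u : Fin (n + 1) → (Fin n → ℂ) := fun j i => fi i (y j)⁻¹ with hu
    have hnotli : ¬ LinearIndependent ℂ u := by
      intro hli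
      have := hli.fintype_card_le_finrank
      simp [Module.finrank_pi] at this
    obtain ⟨c, hsum, j₀, hj₀⟩ := Fintype.not_linearIndependent_iff.mp hnotli
    -- key computation
    have hδ : ∀ j : Fin (n + 1),
        (if (y j)⁻¹ * y j₀ ∈ H then (1 : ℂ) else 0) = if j = j₀ then 1 else 0 := by
      intro j
      by_cases h : (y j)⁻¹ * y j₀ ∈ H
      · have : (QuotientGroup.mk (y j) : G ⧸ H) = QuotientGroup.mk (y j₀) :=
          (QuotientGroup.eq).mpr h
        rw [if_pos h, if_pos (hinj j j₀ this)]
      · have : j ≠ j₀ := by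
          intro hjk; subst hjk; exact h (by simpa using H.one_mem)
        simp [h, this]
    have hkey : c j₀ • g (y j₀) = 0 := by
      have h1 : ∑ j, c j • ((if (y j)⁻¹ * y j₀ ∈ H then (1 : ℂ) else 0) • g (y j₀))
          = c j₀ • g (y j₀) := by
        have : ∀ j, c j • ((if (y j)⁻¹ * y j₀ ∈ H then (1 : ℂ) else 0) • g (y j₀))
            = (if j = j₀ then c j • g (y j₀) else 0) := by
          intro j
          rw [hδ j]
          by_cases h : j = j₀ <;> simp [h]
        rw [Finset.sum_congr rfl (fun j _ => this j)]
        simp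
      have h2 : ∑ j, c j • ((if (y j)⁻¹ * y j₀ ∈ H then (1 : ℂ) else 0) • g (y j₀))
          = ∑ i, (∑ j, c j * fi i (y j)⁻¹) • gi i (y j₀) := by
        calc ∑ j, c j • ((if (y j)⁻¹ * y j₀ ∈ H then (1 : ℂ) else 0) • g (y j₀))
            = ∑ j, ∑ i, (c j * fi i (y j)⁻¹) • gi i (y j₀) := by
              refine Finset.sum_congr rfl fun j _ => ?_
              rw [heq (y j)⁻¹ (y j₀), Finset.smul_sum]
              simp [smul_smul]
          _ = ∑ i, (∑ j, c j * fi i (y j)⁻¹) • gi i (y j₀) := by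
              rw [Finset.sum_comm]
              simp [Finset.sum_smul]
      have h3 : ∀ i : Fin n, ∑ j, c j * fi i (y j)⁻¹ = 0 := by
        intro i
        have := congrFun hsum i
        simpa [hu] using this
      rw [← h1, h2]
      simp [h3]
    exact hy j₀ (by simpa [hj₀] using (smul_eq_zero.mp hkey))
  refine ⟨hSfin.toFinset.image Quotient.out, fun z hz => ?_⟩
  by_contra hgz
  apply hz
  set q : G ⧸ H := QuotientGroup.mk z with hq
  have hqS : q ∈ S := ⟨z, hgz, rfl⟩
  have houtF : q.out ∈ hSfin.toFinset.image Quotient.out :=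
    Finset.mem_image.mpr ⟨q, hSfin.mem_toFinset.mpr hqS, rfl⟩
  have hmkout : (QuotientGroup.mk q.out : G ⧸ H) = QuotientGroup.mk z := by
    rw [← hq]; exact QuotientGroup.out_eq' q
  have hmemH : q.out⁻¹ * z ∈ H := (QuotientGroup.eq).mp hmkout
  exact ⟨q.out, by simpa using houtF, q.out⁻¹ * z, hmemH, by group⟩
end

section
/- Let G be a locally compact group and H a compact open subgroup of G (with normalized Haar measure on H). For a function f : G → ℂ the following are equivalent: (i) f lies in the linear span of the functions ₓφ with x ∈ G and φ ∈ P(H), where ₓφ is the function on G equal to φ(x⁻¹y) for y ∈ xH and 0 for y ∉ xH; (ii) there exist finitely many functions f₁, …, fₙ ∈ C_c(G) and continuous functions φ₁, …, φₙ : H → ℂ such that f(xh) = Σ_{i=1}^n f_i(x)·φ_i(h) for all x ∈ G and h ∈ H. -/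
open Filter Topology
open scoped Pointwise

/-- A function `φ` on a (compact) topological group `H` is *polynomial* if it is continuous
and there are finitely many continuous functions `uᵢ, vᵢ` with
`φ (h * k) = ∑ i, uᵢ h * vᵢ k` for all `h, k`. -/
def IsPolynomialFun {H : Type*} [Group H] [TopologicalSpace H] (φ : H → ℂ) : Prop :=
  Continuous φ ∧ ∃ (n : ℕ) (u v : Fin n → H → ℂ),
    (∀ i, Continuous (u i)) ∧ (∀ i, Continuous (v i)) ∧
    ∀ h k : H, φ (h * k) = ∑ i, u i h * v i k

open scoped Classical in
/-- For a subgroup `H` of `G`, `x ∈ G` and `φ : H → ℂ`, the function `ₓφ` on `G` supported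
on the coset `xH`, equal to `y ↦ φ (x⁻¹ * y)` on `xH` and `0` elsewhere. -/
noncomputable def cosetExt {G : Type*} [Group G] (H : Subgroup G) (x : G) (φ : ↥H → ℂ) :
    G → ℂ :=
  fun y => if h : x⁻¹ * y ∈ H then φ ⟨x⁻¹ * y, h⟩ else 0

open scoped Classical in
lemma extendZero_continuous {G : Type*} [Group G] [TopologicalSpace G]
    (H : Subgroup G) (hHcl : IsClosed (H : Set G)) (hHo : IsOpen (H : Set G))
    (u : ↥H → ℂ) (hu : Continuous u) :
    Continuous (fun y : G => if h : y ∈ H then u ⟨y, h⟩ else 0) := by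
  rw [continuous_iff_continuousAt]
  intro y
  by_cases hy : y ∈ H
  · have hco : ContinuousOn (fun y : G => if h : y ∈ H then u ⟨y, h⟩ else 0) (H : Set G) := by
      rw [continuousOn_iff_continuous_restrict]
      have : (H : Set G).restrict (fun y : G => if h : y ∈ H then u ⟨y, h⟩ else 0)
          = fun z : (H : Set G) => u ⟨z.1, z.2⟩ := by
        funext z
        simp [Set.restrict, z.2]
      refine (congrArg Continuous this).mpr ?_
      exact hu.comp (by continuity)
    exact hco.continuousAt (hHo.mem_nhds hy)
  · have heq : (fun y : G => if h : y ∈ H then u ⟨y, h⟩ else 0) =ᶠ[nhds y]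
        (fun _ => (0 : ℂ)) := by
      filter_upwards [hHcl.isOpen_compl.mem_nhds hy] with z hz
      simp [Set.mem_compl_iff, SetLike.mem_coe] at hz
      simp [hz]
    exact (continuousAt_congr heq).mpr continuousAt_const

lemma cosetExt_continuous {G : Type*} [Group G] [TopologicalSpace G] [IsTopologicalGroup G]
    (H : Subgroup G) (hHcl : IsClosed (H : Set G)) (hHo : IsOpen (H : Set G))
    (x : G) (u : ↥H → ℂ) (hu : Continuous u) :
    Continuous (cosetExt H x u) := by
  classical
  have : cosetExt H x u =
      (fun y : G => if h : y ∈ H then u ⟨y, h⟩ else 0) ∘ (fun y => x⁻¹ * y) := by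
    funext y; simp [cosetExt, Function.comp]
  rw [this]
  exact (extendZero_continuous H hHcl hHo u hu).comp (continuous_mul_left _)

lemma cosetExt_hasCompactSupport {G : Type*} [Group G] [TopologicalSpace G]
    [IsTopologicalGroup G] [T2Space G]
    (H : Subgroup G) (hHc : IsCompact (H : Set G))
    (x : G) (u : ↥H → ℂ) :
    HasCompactSupport (cosetExt H x u) := by
  apply HasCompactSupport.intro (hHc.smul x)
  intro y hy
  rw [cosetExt, dif_neg]
  intro hmem
  exact hy (Set.mem_smul_set_iff_inv_smul_mem.mpr (by simpa using hmem))

/-- For `H` a compact open subgroup of a locally compact group `G`, a function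
`f : G → ℂ` belongs to the span of the translates `ₓφ` (`x ∈ G`, `φ ∈ P(H)`) if and only
if there are finitely many `fᵢ ∈ C_c(G)` and continuous `φᵢ : H → ℂ` with
`f (x * h) = ∑ i, fᵢ x * φᵢ h` for all `x ∈ G`, `h ∈ H`. -/
theorem mem_span_cosetExt_iff
    {G : Type*} [Group G] [TopologicalSpace G] [IsTopologicalGroup G]
    [LocallyCompactSpace G] [T2Space G]
    (H : Subgroup G) (hHc : IsCompact (H : Set G)) (hHo : IsOpen (H : Set G))
    (f : G → ℂ) :
    f ∈ Submodule.span ℂ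
        {ψ : G → ℂ | ∃ (x : G) (φ : ↥H → ℂ), IsPolynomialFun φ ∧ ψ = cosetExt H x φ} ↔
      ∃ (n : ℕ) (fi : Fin n → G → ℂ) (φi : Fin n → ↥H → ℂ),
        (∀ i, Continuous (fi i) ∧ HasCompactSupport (fi i)) ∧
        (∀ i, Continuous (φi i)) ∧
        ∀ (x : G) (h : ↥H), f (x * (h : G)) = ∑ i, fi i x * φi i h := by
  classical
  have hHcl : IsClosed (H : Set G) := hHc.isClosed
  constructor
  · intro hf
    induction hf using Submodule.span_induction with
    | mem ψ hψ =>
      obtain ⟨x₀, φ, ⟨hφc, n, u, v, hu, hv, huv⟩, rfl⟩ := hψ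
      refine ⟨n, fun i => cosetExt H x₀ (u i), v, fun i =>
        ⟨cosetExt_continuous H hHcl hHo x₀ (u i) (hu i),
         cosetExt_hasCompactSupport H hHc x₀ (u i)⟩, hv, ?_⟩
      intro x h
      by_cases hm : x₀⁻¹ * x ∈ H
      · have hm' : x₀⁻¹ * (x * (h : G)) ∈ H := by
          rw [← mul_assoc]
          exact H.mul_mem hm h.2
        have hsub : (⟨x₀⁻¹ * (x * (h : G)), hm'⟩ : ↥H) = ⟨x₀⁻¹ * x, hm⟩ * h := by
          ext; simp [mul_assoc]
        simp only [cosetExt]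
        rw [dif_pos hm', hsub, huv]
        refine Finset.sum_congr rfl fun i _ => ?_
        rw [dif_pos hm]
      · have hm' : x₀⁻¹ * (x * (h : G)) ∉ H := by
          rw [← mul_assoc]
          exact fun hc => hm ((mul_mem_cancel_right h.2).mp hc)
        simp only [cosetExt]
        rw [dif_neg hm']
        symm
        refine Finset.sum_eq_zero fun i _ => ?_
        rw [dif_neg hm, zero_mul]
    | zero =>
      exact ⟨0, ![], ![], by simp, by simp, by simp⟩
    | add g₁ g₂ _ _ ih1 ih2 =>
      obtain ⟨n₁, fi₁, φi₁, hc₁, hφ₁, he₁⟩ := ih1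
      obtain ⟨n₂, fi₂, φi₂, hc₂, hφ₂, he₂⟩ := ih2
      refine ⟨n₁ + n₂, Fin.append fi₁ fi₂, Fin.append φi₁ φi₂, ?_, ?_, ?_⟩
      · intro i
        refine Fin.addCases (fun j => ?_) (fun j => ?_) i
        · simpa [Fin.append_left] using hc₁ j
        · simpa [Fin.append_right] using hc₂ j
      · intro i
        refine Fin.addCases (fun j => ?_) (fun j => ?_) i
        · simpa [Fin.append_left] using hφ₁ j
        · simpa [Fin.append_right] using hφ₂ j
      · intro x h
        simp only [Pi.add_apply, he₁ x h, he₂ x h, Fin.sum_univ_add, Fin.append_left,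
          Fin.append_right]
    | smul c g _ ih =>
      obtain ⟨n, fi, φi, hc, hφ, he⟩ := ih
      refine ⟨n, fun i => c • fi i, φi, fun i => ⟨(hc i).1.const_smul c, (hc i).2.smul_left⟩,
        hφ, ?_⟩
      intro x h
      simp only [Pi.smul_apply, he x h, Finset.mul_sum, smul_eq_mul]
      exact Finset.sum_congr rfl fun i _ => by ring
  · rintro ⟨n, fi, φi, hc, hφ, he⟩
    -- the support of f is contained in finitely many cosets
    set K : Set G := ⋃ i : Fin n, tsupport (fi i) with hK
    have hKc : IsCompact K := isCompact_iUnion fun i => (hc i).2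
    have hKcov : K ⊆ ⋃ x : G, x • (H : Set G) := by
      intro y _
      refine Set.mem_iUnion.mpr ⟨y, Set.mem_smul_set_iff_inv_smul_mem.mpr ?_⟩
      simp [H.one_mem]
    obtain ⟨t, ht⟩ := hKc.elim_finite_subcover (fun x : G => x • (H : Set G))
      (fun x => hHo.smul x) hKcov
    set T : Finset (G ⧸ H) := t.image (QuotientGroup.mk : G → G ⧸ H) with hT
    -- f vanishes outside the cosets determined by T
    have hfy : ∀ y : G, (QuotientGroup.mk y : G ⧸ H) ∉ T → f y = 0 := by
      intro y hy
      by_contra hfy0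
      have hyK : y ∈ K := by
        have h1 : f y = ∑ i, fi i y * φi i 1 := by
          simpa using he y 1
        have : ∃ i, fi i y ≠ 0 := by
          by_contra hall
          push_neg at hall
          rw [h1] at hfy0
          exact hfy0 (Finset.sum_eq_zero fun i _ => by rw [hall i, zero_mul])
        obtain ⟨i, hi⟩ := this
        exact Set.mem_iUnion.mpr ⟨i, subset_tsupport _ hi⟩
      obtain ⟨s, hst⟩ := Set.mem_iUnion₂.mp (ht hyK)
      obtain ⟨hs_mem, hys⟩ := hst
      have : (QuotientGroup.mk y : G ⧸ H) = QuotientGroup.mk s := by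
        rw [QuotientGroup.eq]
        have h2 : s⁻¹ * y ∈ H := by simpa using Set.mem_smul_set_iff_inv_smul_mem.mp hys
        simpa [mul_inv_rev] using H.inv_mem h2
      exact hy (this ▸ Finset.mem_image_of_mem _ hs_mem)
    -- the decomposition of f as a sum of coset functions
    have hdecomp : f = ∑ c ∈ T, cosetExt H c.out (fun h : ↥H => f (c.out * (h : G))) := by
      funext y
      rw [Finset.sum_apply]
      have hterm : ∀ c ∈ T, cosetExt H c.out (fun h : ↥H => f (c.out * (h : G))) y
          = if c = QuotientGroup.mk y then f y else 0 := by
        intro c _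
        have hco : (QuotientGroup.mk c.out : G ⧸ H) = c := c.out_eq
        by_cases hm : c.out⁻¹ * y ∈ H
        · simp only [cosetExt]
          rw [dif_pos hm, if_pos (hco ▸ (QuotientGroup.eq.mpr hm))]
          simp
        · simp only [cosetExt]
          rw [dif_neg hm, if_neg]
          intro hcy
          exact hm (QuotientGroup.eq.mp (hco.trans hcy))
      rw [Finset.sum_congr rfl hterm, Finset.sum_ite_eq']
      by_cases hyT : (QuotientGroup.mk y : G ⧸ H) ∈ T
      · rw [if_pos hyT]
      · rw [if_neg hyT, hfy y hyT]
    rw [hdecomp]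
    refine Submodule.sum_mem _ fun c _ => Submodule.subset_span ?_
    refine ⟨c.out, _, ⟨?_, n, fun i h => fi i (c.out * (h : G)), φi, ?_, hφ, ?_⟩, rfl⟩
    · have : (fun h : ↥H => f (c.out * (h : G))) =
          fun h : ↥H => ∑ i, fi i (c.out * (h : G)) * φi i 1 := by
        funext h
        simpa using he (c.out * (h : G)) 1
      rw [this]
      exact continuous_finset_sum _ fun i _ =>
        (((hc i).1.comp (continuous_mul_left _)).comp continuous_subtype_val).mul
          continuous_const
    · intro i
      exact ((hc i).1.comp (continuous_mul_left _)).comp continuous_subtype_val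
    · intro h k
      have := he (c.out * (h : G)) k
      simpa [mul_assoc] using this
end

section
/- Let G be a locally compact group and let H and K be two compact open subgroups of G. Then a function f : G → ℂ admits finitely many f₁, …, fₙ ∈ C_c(G) and continuous φ₁, …, φₙ : H → ℂ with f(xh) = Σ_{i=1}^n f_i(x)·φ_i(h) for all x ∈ G, h ∈ H, if and only if it admits finitely many f'₁, …, f'ₘ ∈ C_c(G) and continuous ψ₁, …, ψₘ : K → ℂ with f(xk) = Σ_{j=1}^m f'_j(x)·ψ_j(k) for all x ∈ G, k ∈ K. -/
/-- The factorization property of a function `f : G → ℂ` relative to a (compact open)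
subgroup `H`: there are finitely many `fᵢ ∈ C_c(G)` and continuous `φᵢ : H → ℂ` with
`f (x * h) = ∑ i, fᵢ x * φᵢ h` for all `x ∈ G`, `h ∈ H`. -/
def PolyPropWrt {G : Type*} [Group G] [TopologicalSpace G] (H : Subgroup G)
    (f : G → ℂ) : Prop :=
  ∃ (n : ℕ) (fi : Fin n → G → ℂ) (φ : Fin n → ↥H → ℂ),
    (∀ i, Continuous (fi i) ∧ HasCompactSupport (fi i)) ∧
    (∀ i, Continuous (φ i)) ∧
    ∀ (x : G) (h : ↥H), f (x * (h : G)) = ∑ i, fi i x * φ i h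

open scoped Classical

/-- Restriction: the property w.r.t. a subgroup passes to smaller subgroups. -/
lemma polyPropWrt_of_le {G : Type*} [Group G] [TopologicalSpace G]
    {L K : Subgroup G} (hLK : L ≤ K) {f : G → ℂ} (h : PolyPropWrt K f) :
    PolyPropWrt L f := by
  obtain ⟨n, fi, φ, hfi, hφ, hsum⟩ := h
  refine ⟨n, fi, fun i l => φ i ⟨l.1, hLK l.2⟩, hfi, ?_, ?_⟩
  · exact fun i => (hφ i).comp (Continuous.subtype_mk continuous_subtype_val _)
  · exact fun x l => hsum x ⟨l.1, hLK l.2⟩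

/-- Induction step: the property passes from an open subgroup up to a compact overgroup. -/
lemma polyPropWrt_of_le_up {G : Type*} [Group G] [TopologicalSpace G]
    [IsTopologicalGroup G] {L K : Subgroup G} (hLK : L ≤ K)
    (hLo : IsOpen (L : Set G)) (hKc : IsCompact (K : Set G)) {f : G → ℂ}
    (hf : PolyPropWrt L f) : PolyPropWrt K f := by
  obtain ⟨n, fi, φ, hfi, hφ, hsum⟩ := hf
  haveI : CompactSpace K := isCompact_iff_compactSpace.mp hKc
  set M : Subgroup K := L.subgroupOf K with hM
  have hMo : IsOpen (M : Set K) := Subgroup.subgroupOf_isOpen K L hLo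
  haveI : Finite (K ⧸ M) := Subgroup.quotient_finite_of_isOpen M hMo
  haveI : DiscreteTopology (K ⧸ M) := QuotientGroup.discreteTopology hMo
  haveI : Fintype (K ⧸ M) := Fintype.ofFinite _
  have hLclosed : IsClosed (L : Set G) := Subgroup.isClosed_of_isOpen L hLo
  -- extend each φ i by zero to all of G
  set Φ : Fin n → G → ℂ := fun i g => if hg : g ∈ L then φ i ⟨g, hg⟩ else 0 with hΦ
  have hΦcont : ∀ i, Continuous (Φ i) := by
    intro i
    rw [continuous_iff_continuousAt]
    intro g
    by_cases hg : g ∈ L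
    · have hcOn : ContinuousOn (Φ i) (L : Set G) := by
        rw [continuousOn_iff_continuous_restrict]
        have h1 : (L : Set G).domRestrict (Φ i) = fun x => φ i ⟨x.1, x.2⟩ := by
          funext x
          simp only [Set.domRestrict, hΦ]
          exact dif_pos x.2
        rw [h1]
        exact (hφ i).comp (Continuous.subtype_mk continuous_subtype_val _)
      exact hcOn.continuousAt (hLo.mem_nhds hg)
    · refine ContinuousAt.congr (continuousAt_const (y := (0 : ℂ))) ?_
      filter_upwards [hLclosed.isOpen_compl.mem_nhds hg] with g' hg'
      have h0 : Φ i g' = 0 := by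
        simp only [hΦ]
        exact dif_neg (fun h => hg' h)
      exact h0.symm
  have hΦval : ∀ i (g : G) (hg : g ∈ L), Φ i g = φ i ⟨g, hg⟩ := by
    intro i g hg; simp only [hΦ]; rw [dif_pos hg]
  set r : K ⧸ M → K := Quotient.out with hr
  let e := Fintype.equivFin (Fin n × (K ⧸ M))
  refine ⟨Fintype.card (Fin n × (K ⧸ M)),
    fun j x => fi (e.symm j).1 (x * ((r (e.symm j).2 : K) : G)),
    fun j k => (if QuotientGroup.mk k = (e.symm j).2 then (1 : ℂ) else 0) *
      Φ (e.symm j).1 (((r (e.symm j).2 : K) : G)⁻¹ * (k : G)), ?_, ?_, ?_⟩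
  · intro j
    constructor
    · exact (hfi (e.symm j).1).1.comp (continuous_mul_right _)
    · exact (hfi (e.symm j).1).2.comp_homeomorph (Homeomorph.mulRight _)
  · intro j
    apply Continuous.mul
    · exact
        (continuous_of_discreteTopology
          (f := fun q : K ⧸ M => if q = (e.symm j).2 then (1 : ℂ) else 0)).comp
          continuous_quot_mk
    · exact (hΦcont (e.symm j).1).comp
        (continuous_const.mul continuous_subtype_val)
  · intro x k
    beta_reduce
    rw [Equiv.sum_comp e.symm (fun p : Fin n × (K ⧸ M) =>
      fi p.1 (x * ((r p.2 : K) : G)) *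
        ((if QuotientGroup.mk k = p.2 then (1 : ℂ) else 0) *
          Φ p.1 (((r p.2 : K) : G)⁻¹ * (k : G))))]
    rw [Fintype.sum_prod_type]
    have hc : ∀ i : Fin n, ∑ c : K ⧸ M,
        fi i (x * ((r c : K) : G)) *
          ((if QuotientGroup.mk k = c then (1 : ℂ) else 0) *
            Φ i (((r c : K) : G)⁻¹ * (k : G)))
        = fi i (x * ((r (QuotientGroup.mk k) : K) : G)) *
            Φ i (((r (QuotientGroup.mk k) : K) : G)⁻¹ * (k : G)) := by
      intro i
      rw [Finset.sum_eq_single (QuotientGroup.mk (k : K))]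
      · rw [if_pos rfl, one_mul]
      · intro c _ hcne
        rw [if_neg (Ne.symm (Ne.symm hcne)).symm]
        ring
      · intro habs; exact absurd (Finset.mem_univ _) habs
    simp only [hc]
    -- now identify with the hypothesis
    set c := QuotientGroup.mk (s := M) k with hcdef
    set rc : K := r c with hrc
    have hmemM : rc⁻¹ * k ∈ M := by
      have : QuotientGroup.mk (s := M) rc = QuotientGroup.mk k := Quotient.out_eq c
      exact QuotientGroup.eq.mp this
    have hmemL : ((rc⁻¹ * k : K) : G) ∈ L := hmemM
    have hval : ∀ i, Φ i (((rc : K) : G)⁻¹ * (k : G)) = φ i ⟨((rc⁻¹ * k : K) : G), hmemL⟩ := by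
      intro i
      have harg : ((rc : K) : G)⁻¹ * (k : G) = ((rc⁻¹ * k : K) : G) := by
        push_cast; ring
      rw [harg, hΦval i _ hmemL]
    have hx : x * (k : G) = (x * (rc : G)) * ((rc⁻¹ * k : K) : G) := by
      push_cast; group
    rw [hx, hsum (x * (rc : G)) ⟨((rc⁻¹ * k : K) : G), hmemL⟩]
    exact Finset.sum_congr rfl fun i _ => by rw [hval i]

/-- The factorization property is independent of the choice of compact open subgroup. -/
theorem polyPropWrt_iff_polyPropWrt
    {G : Type*} [Group G] [TopologicalSpace G] [IsTopologicalGroup G]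
    [LocallyCompactSpace G] [T2Space G]
    (H K : Subgroup G)
    (hHc : IsCompact (H : Set G)) (hHo : IsOpen (H : Set G))
    (hKc : IsCompact (K : Set G)) (hKo : IsOpen (K : Set G))
    (f : G → ℂ) :
    PolyPropWrt H f ↔ PolyPropWrt K f := by
  have hinf : IsOpen ((H ⊓ K : Subgroup G) : Set G) := by
    rw [Subgroup.coe_inf]; exact hHo.inter hKo
  constructor
  · intro h
    exact polyPropWrt_of_le_up inf_le_right hinf hKc (polyPropWrt_of_le inf_le_left h)
  · intro h
    exact polyPropWrt_of_le_up inf_le_left hinf hHc (polyPropWrt_of_le inf_le_right h)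
end

section
/- Let G be a locally compact group possessing a compact open subgroup. A function f : G → ℂ belongs to P(G) if and only if f ∈ C₀(G) and there exist nonzero functions g, h ∈ C₀(G) and finitely many functions f₁, …, fₘ, g₁, …, gₘ, f'₁, …, f'ₙ, g'₁, …, g'ₙ ∈ C₀(G), all nonzero, such that for all x, y ∈ G: (i) f(xy)·g(y) = Σ_{i=1}^m f_i(x)·g_i(y), and (ii) f(y)·h(xy) = Σ_{j=1}^n f'_j(x)·g'_j(y). -/
open Filter Topology

open Function Set
open scoped Classical Pointwise


/-- Finitely many evaluation points separate a finite-dimensional space of functions. -/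
lemma exists_sep_points {α : Type*} (D : Submodule ℂ (α → ℂ)) [FiniteDimensional ℂ D] :
    ∃ (k : ℕ) (z : Fin k → α), ∀ v ∈ D, (∀ l, v (z l) = 0) → v = 0 := by
  generalize hd : Module.finrank ℂ D = d
  induction d using Nat.strong_induction_on generalizing D with
  | _ d IH =>
    by_cases hD : D = ⊥
    · exact ⟨0, Fin.elim0, fun v hv _ => by simpa [hD] using hv⟩
    · obtain ⟨v₀, hv₀D, hv₀⟩ := D.ne_bot_iff.mp hD
      have hz₀ : ∃ z₀, v₀ z₀ ≠ 0 := by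
        by_contra hcon
        push_neg at hcon
        exact hv₀ (funext hcon)
      obtain ⟨z₀, hz₀⟩ := hz₀
      set D' : Submodule ℂ (α → ℂ) := D ⊓ LinearMap.ker (LinearMap.proj z₀) with hD'
      haveI : FiniteDimensional ℂ D' := Submodule.finiteDimensional_of_le inf_le_left
      have hlt : D' < D := by
        refine lt_of_le_of_ne inf_le_left (fun hEq => ?_)
        have : v₀ ∈ D' := hEq ▸ hv₀D
        exact hz₀ this.2
      have hrank : Module.finrank ℂ D' < d := hd ▸ Submodule.finrank_lt_finrank_of_lt hlt
      obtain ⟨k, z, hsep⟩ := IH _ hrank D' rfl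
      refine ⟨k + 1, Fin.cons z₀ z, fun v hv hvz => ?_⟩
      have hv' : v ∈ D' := ⟨hv, by simpa using hvz 0⟩
      exact hsep v hv' fun l => by simpa using hvz l.succ

/-- Indicator of a clopen set is continuous. -/
lemma continuous_indicator_clopen {G : Type*} [TopologicalSpace G] {s : Set G}
    (ho : IsOpen s) (hc : IsClosed s) :
    Continuous (fun x => if x ∈ s then (1 : ℂ) else 0) := by
  refine continuous_if (fun a ha => ?_) continuousOn_const continuousOn_const
  have : frontier s = ∅ := IsClopen.frontier_eq ⟨hc, ho⟩
  simp only [Set.setOf_mem_eq] at ha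
  rw [this] at ha
  exact absurd ha (Set.notMem_empty a)

/-- Prune away the zero functions in a bilinear-sum factorization. -/
lemma prune_family {G : Type*} {k : ℕ} (F Gg : Fin k → G → ℂ) :
    ∃ (m : ℕ) (F' G' : Fin m → G → ℂ),
      (∀ i, ∃ i₀, F' i = F i₀ ∧ G' i = Gg i₀) ∧
      (∀ i, F' i ≠ 0 ∧ G' i ≠ 0) ∧
      ∀ x y : G, (∑ i, F' i x * G' i y) = ∑ i, F i x * Gg i y := by
  classical
  set s : Finset (Fin k) := Finset.univ.filter (fun i => F i ≠ 0 ∧ Gg i ≠ 0) with hs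
  refine ⟨s.card, fun i => F (s.equivFin.symm i).1, fun i => Gg (s.equivFin.symm i).1,
    fun i => ⟨(s.equivFin.symm i).1, rfl, rfl⟩, fun i => ?_, fun x y => ?_⟩
  · have hmem := Finset.mem_filter.mp (s.equivFin.symm i).2
    exact ⟨hmem.2.1, hmem.2.2⟩
  · have h1 : (∑ i : Fin s.card, F (s.equivFin.symm i).1 x * Gg (s.equivFin.symm i).1 y)
        = ∑ a : s, F a.1 x * Gg a.1 y :=
      Equiv.sum_comp s.equivFin.symm (fun a : s => F a.1 x * Gg a.1 y)
    show (∑ i : Fin s.card, F (s.equivFin.symm i).1 x * Gg (s.equivFin.symm i).1 y) = _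
    rw [h1, Finset.sum_coe_sort s (fun a => F a x * Gg a y)]
    refine Finset.sum_subset (Finset.subset_univ s) (fun i _ hi => ?_)
    have hbad : ¬(F i ≠ 0 ∧ Gg i ≠ 0) :=
      fun hcon => hi (Finset.mem_filter.mpr ⟨Finset.mem_univ i, hcon⟩)
    rcases not_and_or.mp hbad with h | h
    · rw [not_not.mp h]; simp
    · rw [not_not.mp h]; simp

/-- A continuous function vanishing at infinity is bounded. -/
lemma bounded_of_zero_at_infty {G : Type*} [TopologicalSpace G] {f : G → ℂ}
    (hc : Continuous f) (hz : Tendsto f (cocompact G) (𝓝 0)) :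
    ∃ M : ℝ, 0 ≤ M ∧ ∀ x, ‖f x‖ ≤ M := by
  have h1 : {x | f x ∈ Metric.closedBall 0 1} ∈ cocompact G :=
    hz (Metric.closedBall_mem_nhds 0 one_pos)
  obtain ⟨K, hK, hKs⟩ := mem_cocompact.mp h1
  obtain ⟨M0, hM0⟩ := (hK.image hc.norm).bddAbove
  refine ⟨max M0 1, le_trans zero_le_one (le_max_right _ _), fun x => ?_⟩
  by_cases hx : x ∈ K
  · exact le_trans (hM0 ⟨x, hx, rfl⟩) (le_max_left _ _)
  · have := hKs hx
    simp only [Set.mem_setOf_eq, Metric.mem_closedBall, dist_zero_right] at this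
    exact le_trans this (le_max_right _ _)

/-- The space `P(G)` of polynomial functions on `G`: all continuous compactly supported
`f : G → ℂ` such that for some compact open subgroup `H` of `G` there are finitely many
`fᵢ ∈ C_c(G)` and continuous `φᵢ : H → ℂ` with `f (x * h) = ∑ i, fᵢ x * φᵢ h` for all
`x ∈ G`, `h ∈ H`. -/
def PolyFun (G : Type*) [Group G] [TopologicalSpace G] : Set (G → ℂ) :=
  {f | Continuous f ∧ HasCompactSupport f ∧
    ∃ H : Subgroup G, IsCompact (H : Set G) ∧ IsOpen (H : Set G) ∧
      ∃ (n : ℕ) (fi : Fin n → G → ℂ) (φ : Fin n → ↥H → ℂ),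
        (∀ i, Continuous (fi i) ∧ HasCompactSupport (fi i)) ∧
        (∀ i, Continuous (φ i)) ∧
        ∀ (x : G) (h : ↥H), f (x * (h : G)) = ∑ i, fi i x * φ i h}

section Forward

variable {G : Type*} [Group G] [TopologicalSpace G] [IsTopologicalGroup G] [T2Space G]

lemma forward_family2 (f : G → ℂ) (hfc : Continuous f) (hfs : HasCompactSupport f)
    (H : Subgroup G) (hHc : IsCompact (H : Set G)) (hHo : IsOpen (H : Set G)) :
    ∃ (N : ℕ) (fj gj : Fin N → G → ℂ),
      (∀ i, Continuous (fj i) ∧ HasCompactSupport (fj i)) ∧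
      (∀ i, Continuous (gj i) ∧ HasCompactSupport (gj i)) ∧
      ∀ x y : G, f y * (if x * y ∈ (H : Set G) then (1:ℂ) else 0) = ∑ i, fj i x * gj i y := by
  set W : G → Set G := fun c => (fun h => h * c) '' (H : Set G) with hW
  have hmemW : ∀ c, c ∈ W c := fun c => ⟨1, H.one_mem, one_mul c⟩
  have hWo : ∀ c, IsOpen (W c) := fun c => (Homeomorph.mulRight c).isOpenMap _ hHo
  have hWcomp : ∀ c, IsCompact (W c) := fun c => hHc.image (continuous_mul_right c)
  have hWmul : ∀ {x c : G}, x ∈ W c → ∀ y : G, (x * y ∈ (H : Set G) ↔ c * y ∈ (H : Set G)) := by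
    rintro x c ⟨h, hh, rfl⟩ y
    rw [mul_assoc]
    exact H.mul_mem_cancel_left hh
  have hWeq : ∀ {a b x : G}, x ∈ W a → x ∈ W b → W a = W b := by
    rintro a b x ⟨h₁, hh₁, rfl⟩ ⟨h₂, hh₂, he⟩
    change h₂ * b = h₁ * a at he
    ext w
    constructor
    · rintro ⟨h, hh, rfl⟩
      refine ⟨h * h₁⁻¹ * h₂, H.mul_mem (H.mul_mem hh (H.inv_mem hh₁)) hh₂, ?_⟩
      show h * h₁⁻¹ * h₂ * b = h * a
      rw [mul_assoc (h * h₁⁻¹), he]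
      group
    · rintro ⟨h, hh, rfl⟩
      refine ⟨h * h₂⁻¹ * h₁, H.mul_mem (H.mul_mem hh (H.inv_mem hh₂)) hh₁, ?_⟩
      show h * h₂⁻¹ * h₁ * a = h * b
      rw [mul_assoc (h * h₂⁻¹), ← he]
      group
  -- compact set of relevant x's
  have hC : IsCompact ((H : Set G) * (tsupport f)⁻¹) := hHc.mul hfs.inv
  obtain ⟨t, ht⟩ := hC.elim_finite_subcover W hWo
    (fun x _ => mem_iUnion.mpr ⟨x, hmemW x⟩)
  set u : Finset (Set G) := t.image W with hu
  set N := u.card with hN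
  set ee : Fin N ≃ ↥u := u.equivFin.symm with hee
  have hrep : ∀ S : ↥u, ∃ c, W c = S.1 := by
    intro S
    obtain ⟨c, _, hc⟩ := Finset.mem_image.mp S.2
    exact ⟨c, hc⟩
  set cc : Fin N → G := fun i => (hrep (ee i)).choose with hcc
  have hccW : ∀ i, W (cc i) = (ee i).1 := fun i => (hrep (ee i)).choose_spec
  have hccinj : ∀ {i j}, i ≠ j → W (cc i) ≠ W (cc j) := by
    intro i j hij hcon
    rw [hccW i, hccW j] at hcon
    exact hij (ee.injective (Subtype.ext hcon))
  refine ⟨N, fun i x => if x ∈ W (cc i) then (1:ℂ) else 0,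
    fun i y => (if cc i * y ∈ (H : Set G) then (1:ℂ) else 0) * f y, ?_, ?_, ?_⟩
  · intro i
    refine ⟨continuous_indicator_clopen (hWo _) (hWcomp _).isClosed, ?_⟩
    exact HasCompactSupport.intro (hWcomp (cc i)) (fun x hx => if_neg hx)
  · intro i
    constructor
    · exact ((continuous_indicator_clopen hHo hHc.isClosed).comp
        (continuous_mul_left (cc i))).mul hfc
    · refine HasCompactSupport.intro hfs (fun y hy => ?_)
      have h0 : f y = 0 := image_eq_zero_of_notMem_tsupport hy
      show (if cc i * y ∈ (H : Set G) then (1:ℂ) else 0) * f y = 0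
      rw [h0, mul_zero]
  · intro x y
    show f y * (if x * y ∈ (H : Set G) then (1:ℂ) else 0)
      = ∑ i, (if x ∈ W (cc i) then (1:ℂ) else 0)
          * ((if cc i * y ∈ (H : Set G) then (1:ℂ) else 0) * f y)
    rcases eq_or_ne (f y) 0 with hfy | hfy
    · simp [hfy]
    · by_cases hxy : x * y ∈ (H : Set G)
      · -- x lies in H * (tsupport f)⁻¹
        have hyK : y ∈ tsupport f := subset_tsupport f hfy
        have hxC : x ∈ (H : Set G) * (tsupport f)⁻¹ :=
          ⟨x * y, hxy, y⁻¹, by simpa using hyK, by group⟩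
        obtain ⟨c₀, hc₀t, hxc₀⟩ := by
          have := ht hxC
          simpa only [mem_iUnion, exists_prop] using this
        have hWc₀u : W c₀ ∈ u := Finset.mem_image_of_mem W hc₀t
        set i₀ : Fin N := ee.symm ⟨W c₀, hWc₀u⟩ with hi₀
        have hxi₀ : x ∈ W (cc i₀) := by
          rw [hccW i₀, hi₀, Equiv.apply_symm_apply]
          exact hxc₀
        rw [if_pos hxy, mul_one]
        rw [Finset.sum_eq_single i₀]
        · rw [if_pos hxi₀, one_mul, if_pos ((hWmul hxi₀ y).mp hxy), one_mul]
        · intro i _ hi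
          by_cases hxi : x ∈ W (cc i)
          · exact absurd (hWeq hxi hxi₀) (hccinj hi)
          · rw [if_neg hxi, zero_mul]
        · intro hcon
          exact absurd (Finset.mem_univ i₀) hcon
      · rw [if_neg hxy, mul_zero]
        refine (Finset.sum_eq_zero (fun i _ => ?_)).symm
        by_cases hxi : x ∈ W (cc i)
        · rw [if_neg (fun hc => hxy ((hWmul hxi y).mpr hc)), zero_mul, mul_zero]
        · rw [if_neg hxi, zero_mul]

end Forward

section Forward2
variable {G : Type*} [Group G] [TopologicalSpace G] [IsTopologicalGroup G] [T2Space G]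

lemma forward_direction (f : G → ℂ) (hf : f ∈ PolyFun G) :
    (Continuous f ∧ Tendsto f (cocompact G) (𝓝 0)) ∧
      ∃ (m n : ℕ) (g h : G → ℂ) (fi gi : Fin m → G → ℂ) (fj gj : Fin n → G → ℂ),
        (Continuous g ∧ Tendsto g (cocompact G) (𝓝 0) ∧ g ≠ 0) ∧
        (Continuous h ∧ Tendsto h (cocompact G) (𝓝 0) ∧ h ≠ 0) ∧
        (∀ i, Continuous (fi i) ∧ Tendsto (fi i) (cocompact G) (𝓝 0) ∧ fi i ≠ 0) ∧
        (∀ i, Continuous (gi i) ∧ Tendsto (gi i) (cocompact G) (𝓝 0) ∧ gi i ≠ 0) ∧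
        (∀ j, Continuous (fj j) ∧ Tendsto (fj j) (cocompact G) (𝓝 0) ∧ fj j ≠ 0) ∧
        (∀ j, Continuous (gj j) ∧ Tendsto (gj j) (cocompact G) (𝓝 0) ∧ gj j ≠ 0) ∧
        (∀ x y : G, f (x * y) * g y = ∑ i, fi i x * gi i y) ∧
        (∀ x y : G, f y * h (x * y) = ∑ j, fj j x * gj j y) := by
  obtain ⟨hfc, hfs, H, hHc, hHo, n0, fi0, φ0, hfi0, hφ0, hdec⟩ := hf
  set ind : G → ℂ := fun y => if y ∈ (H : Set G) then (1:ℂ) else 0 with hind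
  have hindc : Continuous ind := continuous_indicator_clopen hHo hHc.isClosed
  have hinds : HasCompactSupport ind := HasCompactSupport.intro hHc (fun x hx => if_neg hx)
  have hindz : Tendsto ind (cocompact G) (𝓝 0) := hinds.is_zero_at_infty
  have hindne : ind ≠ 0 := by
    intro h0
    have h1 := congrFun h0 1
    simp only [Pi.zero_apply] at h1
    have h2 : (1:G) ∈ (H : Set G) := H.one_mem
    rw [show ind 1 = if (1:G) ∈ (H : Set G) then (1:ℂ) else 0 from rfl, if_pos h2] at h1
    exact one_ne_zero h1
  haveI : CompactSpace ↥(H : Set G) := isCompact_iff_compactSpace.mp hHc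
  set gext : Fin n0 → G → ℂ :=
    fun i => Function.extend (Subtype.val : ↥(H : Set G) → G)
      (fun u => φ0 i ⟨u.1, u.2⟩) 0 with hgext
  have hgext_mem : ∀ i (y : G) (hy : y ∈ (H : Set G)), gext i y = φ0 i ⟨y, hy⟩ :=
    fun i y hy =>
      Subtype.val_injective.extend_apply (fun u : ↥(H : Set G) => φ0 i ⟨u.1, u.2⟩) 0 ⟨y, hy⟩
  have hgext_nmem : ∀ i (y : G), y ∉ (H : Set G) → gext i y = 0 := by
    intro i y hy
    have : ¬∃ u : ↥(H : Set G), (u : G) = y := by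
      rintro ⟨u, rfl⟩
      exact hy u.2
    rw [hgext]
    exact Function.extend_apply' _ _ _ this
  have hgextc : ∀ i, Continuous (gext i) :=
    fun i => HasCompactSupport.continuous_extend_zero hHo
      ((hφ0 i).comp (continuous_subtype_val.subtype_mk _))
      (IsClosed.isCompact (isClosed_tsupport _))
  have hgexts : ∀ i, HasCompactSupport (gext i) :=
    fun i => HasCompactSupport.intro hHc (fun y hy => hgext_nmem i y hy)
  have identity1 : ∀ x y : G, f (x * y) * ind y = ∑ i, fi0 i x * gext i y := by
    intro x y
    show f (x * y) * (if y ∈ (H : Set G) then (1:ℂ) else 0) = _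
    by_cases hy : y ∈ (H : Set G)
    · rw [if_pos hy, mul_one, hdec x ⟨y, hy⟩]
      exact Finset.sum_congr rfl (fun i _ => by rw [hgext_mem i y hy])
    · rw [if_neg hy, mul_zero]
      exact (Finset.sum_eq_zero (fun i _ => by rw [hgext_nmem i y hy, mul_zero])).symm
  obtain ⟨m, F1, G1, hsub1, hnz1, hsum1⟩ := prune_family fi0 gext
  obtain ⟨N2, fj2, gj2, hfj2, hgj2, hid2⟩ := forward_family2 f hfc hfs H hHc hHo
  obtain ⟨n, F2, G2, hsub2, hnz2, hsum2⟩ := prune_family fj2 gj2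
  refine ⟨⟨hfc, hfs.is_zero_at_infty⟩, m, n, ind, ind, F1, G1, F2, G2,
    ⟨hindc, hindz, hindne⟩, ⟨hindc, hindz, hindne⟩, ?_, ?_, ?_, ?_, ?_, ?_⟩
  · intro i
    obtain ⟨i₀, hFeq, _⟩ := hsub1 i
    exact ⟨hFeq ▸ (hfi0 i₀).1, hFeq ▸ (hfi0 i₀).2.is_zero_at_infty, (hnz1 i).1⟩
  · intro i
    obtain ⟨i₀, _, hGeq⟩ := hsub1 i
    exact ⟨hGeq ▸ hgextc i₀, hGeq ▸ (hgexts i₀).is_zero_at_infty, (hnz1 i).2⟩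
  · intro j
    obtain ⟨j₀, hFeq, _⟩ := hsub2 j
    exact ⟨hFeq ▸ (hfj2 j₀).1, hFeq ▸ (hfj2 j₀).2.is_zero_at_infty, (hnz2 j).1⟩
  · intro j
    obtain ⟨j₀, _, hGeq⟩ := hsub2 j
    exact ⟨hGeq ▸ (hgj2 j₀).1, hGeq ▸ (hgj2 j₀).2.is_zero_at_infty, (hnz2 j).2⟩
  · intro x y
    rw [identity1 x y]
    exact (hsum1 x y).symm
  · intro x y
    have := hid2 x y
    rw [show ind (x * y) = if x * y ∈ (H : Set G) then (1:ℂ) else 0 from rfl, this]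
    exact (hsum2 x y).symm

end Forward2

section Backward

lemma eps_exists (d : ℕ) (Cs R : ℝ) (hCs0 : 0 ≤ Cs) (hR : 0 < R) :
    ∃ ε : ℝ, 0 < ε ∧ (d : ℝ) * Cs * ε < R := by
  have hd0 : (0:ℝ) ≤ (d : ℝ) * Cs := mul_nonneg (Nat.cast_nonneg d) hCs0
  refine ⟨R / ((d : ℝ) * Cs + 1), div_pos hR (by linarith), ?_⟩
  rw [mul_div_assoc', div_lt_iff₀ (by linarith)]
  nlinarith

variable {G : Type*} [Group G] [TopologicalSpace G] [IsTopologicalGroup G] [T2Space G]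

set_option maxHeartbeats 1000000 in
lemma backward_compact_support {n : ℕ} (f h : G → ℂ) (fj gj : Fin n → G → ℂ)
    (hh0 : Tendsto h (cocompact G) (𝓝 0)) (hhne : h ≠ 0)
    (hfjP : ∀ j, Continuous (fj j) ∧ Tendsto (fj j) (cocompact G) (𝓝 0))
    (id2 : ∀ x y : G, f y * h (x * y) = ∑ j, fj j x * gj j y) :
    HasCompactSupport f := by
  classical
  set v : G → (Fin n → ℂ) := fun x j => fj j x with hv
  set V : Submodule ℂ (Fin n → ℂ) := Submodule.span ℂ (Set.range v) with hV
  obtain ⟨b, hbsub, hbspan, hbli⟩ := exists_linearIndependent ℂ (Set.range v)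
  have hbfin : b.Finite := hbli.setFinite
  set bs := hbfin.toFinset with hbs
  set d := bs.card with hd
  set w : Fin d → (Fin n → ℂ) := fun i => (bs.equivFin.symm i).1 with hw
  have hwb : ∀ i, w i ∈ b := fun i => hbfin.mem_toFinset.mp (bs.equivFin.symm i).2
  have hxs : ∀ i, ∃ x, v x = w i := fun i => hbsub (hwb i)
  set xs : Fin d → G := fun i => (hxs i).choose with hxs'
  have hxs2 : ∀ i, v (xs i) = w i := fun i => (hxs i).choose_spec
  have hwli : LinearIndependent ℂ w := by
    have hinj : Function.Injective (fun i => (⟨w i, hwb i⟩ : b)) := by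
      intro i j hij
      have hij' : (⟨w i, hwb i⟩ : b) = ⟨w j, hwb j⟩ := hij
      have hww := Subtype.ext_iff.mp hij'
      exact bs.equivFin.symm.injective (Subtype.ext hww)
    exact hbli.comp _ hinj
  have hspan_eq : Submodule.span ℂ (Set.range w) = V := by
    rw [hV, ← hbspan]
    congr 1
    ext zz
    constructor
    · rintro ⟨i, rfl⟩; exact hwb i
    · intro hz
      have hz' : zz ∈ bs := hbfin.mem_toFinset.mpr hz
      exact ⟨bs.equivFin ⟨zz, hz'⟩, by rw [hw]; simp⟩
  set B : Module.Basis (Fin d) ℂ V := (Module.Basis.span hwli).map (LinearEquiv.ofEq _ _ hspan_eq) with hB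
  have hBcoe : ∀ i, (B i : Fin n → ℂ) = v (xs i) := by
    intro i
    rw [hB, Module.Basis.map_apply, LinearEquiv.coe_ofEq_apply, Module.Basis.span_apply, hxs2]
  have hvV : ∀ x, v x ∈ V := fun x => Submodule.subset_span ⟨x, rfl⟩
  set a : Fin d → G → ℂ := fun i x => B.repr ⟨v x, hvV x⟩ i with ha
  have key1 : ∀ x j, v x j = ∑ i, a i x * v (xs i) j := by
    intro x j
    have h1 := congrArg (fun (zz : V) => (zz : Fin n → ℂ) j) (B.sum_repr ⟨v x, hvV x⟩)
    simp only [AddSubmonoidClass.coe_finset_sum, Finset.sum_apply, SetLike.val_smul,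
      Pi.smul_apply, smul_eq_mul] at h1
    rw [← h1]
    exact (Finset.sum_congr rfl fun i _ => by rw [hBcoe i]).symm
  have key2 : ∀ x y : G, f y * h (x * y) = ∑ i, a i x * (f y * h (xs i * y)) := by
    intro x y
    rw [id2 x y]
    have hfx : ∀ j, fj j x = ∑ i, a i x * fj j (xs i) := fun j => key1 x j
    calc (∑ j, fj j x * gj j y)
        = ∑ j, (∑ i, a i x * fj j (xs i)) * gj j y :=
          Finset.sum_congr rfl fun j _ => by rw [← hfx j]
      _ = ∑ j, ∑ i, a i x * fj j (xs i) * gj j y :=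
          Finset.sum_congr rfl fun j _ => by rw [Finset.sum_mul]
      _ = ∑ i, ∑ j, a i x * fj j (xs i) * gj j y := Finset.sum_comm
      _ = ∑ i, a i x * ∑ j, fj j (xs i) * gj j y := by
          refine Finset.sum_congr rfl fun i _ => ?_
          rw [Finset.mul_sum]
          exact Finset.sum_congr rfl fun j _ => by ring
      _ = ∑ i, a i x * (f y * h (xs i * y)) :=
          Finset.sum_congr rfl fun i _ => by rw [← id2 (xs i) y]
  -- bounds
  have hfjbd : ∀ j, ∃ M, 0 ≤ M ∧ ∀ x, ‖fj j x‖ ≤ M :=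
    fun j => bounded_of_zero_at_infty (hfjP j).1 (hfjP j).2
  choose Mf hMf0 hMf using hfjbd
  set M := ∑ j, Mf j with hM
  have hM0 : 0 ≤ M := Finset.sum_nonneg fun j _ => hMf0 j
  have hvbd : ∀ x, ‖v x‖ ≤ M := by
    intro x
    rw [pi_norm_le_iff_of_nonneg hM0]
    intro j
    exact le_trans (hMf j x) (Finset.single_le_sum (fun j _ => hMf0 j) (Finset.mem_univ j))
  set C : Fin d → ℝ := fun i => ‖LinearMap.toContinuousLinearMap (B.coord i)‖ with hC
  have hC0 : ∀ i, 0 ≤ C i := fun i => by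
    simp only [hC]; exact ContinuousLinearMap.opNorm_nonneg _
  have habd : ∀ i x, ‖a i x‖ ≤ C i * M := by
    intro i x
    have h1 : a i x = (LinearMap.toContinuousLinearMap (B.coord i)) ⟨v x, hvV x⟩ := by
      simp [ha, Module.Basis.coord_apply]
    rw [h1]
    calc ‖(LinearMap.toContinuousLinearMap (B.coord i)) ⟨v x, hvV x⟩‖
        ≤ C i * ‖(⟨v x, hvV x⟩ : V)‖ :=
          (LinearMap.toContinuousLinearMap (B.coord i)).le_opNorm _
      _ ≤ C i * M := by
          have h2 : ‖(⟨v x, hvV x⟩ : V)‖ = ‖v x‖ := rfl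
          rw [h2]
          exact mul_le_mul_of_nonneg_left (hvbd x) (hC0 i)
  obtain ⟨z₀, hz₀⟩ : ∃ z₀, h z₀ ≠ 0 := by
    by_contra hcon; push_neg at hcon; exact hhne (funext hcon)
  obtain ⟨Cs, hCs0, hCs⟩ : ∃ Cs : ℝ, 0 ≤ Cs ∧ ∀ i x, ‖a i x‖ ≤ Cs := by
    refine ⟨∑ i, C i * M, Finset.sum_nonneg fun i _ => mul_nonneg (hC0 i) hM0, fun i x => ?_⟩
    exact le_trans (habd i x)
      (Finset.single_le_sum (fun i _ => mul_nonneg (hC0 i) hM0) (Finset.mem_univ i))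
  obtain ⟨ε, hεpos, hεlt⟩ : ∃ ε : ℝ, 0 < ε ∧ (d : ℝ) * Cs * ε < ‖h z₀‖ :=
    eps_exists d Cs _ hCs0 (norm_pos_iff.mpr hz₀)
  have hev : ∀ᶠ y in cocompact G, ∀ i, ‖h (xs i * y)‖ < ε := by
    rw [eventually_all]
    intro i
    have htt : Tendsto (fun y => h (xs i * y)) (cocompact G) (𝓝 0) :=
      hh0.comp (Filter.tendsto_cocompact_mul_left (inv_mul_cancel (xs i)))
    filter_upwards [htt (Metric.ball_mem_nhds 0 hεpos)] with y hy
    simpa [dist_zero_right] using hy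
  have hev2 : ∀ᶠ y in cocompact G, f y = 0 := by
    filter_upwards [hev] with y hy
    by_contra hfy
    have hk := key2 (z₀ * y⁻¹) y
    rw [inv_mul_cancel_right] at hk
    have hk2 : h z₀ = ∑ i, a i (z₀ * y⁻¹) * h (xs i * y) := by
      apply mul_left_cancel₀ hfy
      rw [hk, Finset.mul_sum]
      exact Finset.sum_congr rfl fun i _ => by ring
    have hb : ‖h z₀‖ ≤ (d : ℝ) * Cs * ε := by
      rw [hk2]
      calc ‖∑ i, a i (z₀ * y⁻¹) * h (xs i * y)‖
          ≤ ∑ i, ‖a i (z₀ * y⁻¹) * h (xs i * y)‖ := norm_sum_le _ _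
        _ ≤ ∑ _i : Fin d, Cs * ε := Finset.sum_le_sum fun i _ => by
            rw [norm_mul]
            exact mul_le_mul (hCs i _) (le_of_lt (hy i)) (norm_nonneg _) hCs0
        _ = (d : ℝ) * Cs * ε := by
            rw [Finset.sum_const, Finset.card_univ, Fintype.card_fin]
            push_cast
            ring
    exact lt_irrefl _ (lt_of_le_of_lt hb hεlt)
  obtain ⟨K, hK, hKs⟩ := mem_cocompact.mp hev2
  exact HasCompactSupport.intro hK (fun x hx => hKs hx)

end Backward

section Backward2

variable {G : Type*} [Group G] [TopologicalSpace G] [IsTopologicalGroup G] [T2Space G]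

set_option maxHeartbeats 1000000 in
lemma backward_decomposition {m : ℕ} (f g : G → ℂ) (fi gi : Fin m → G → ℂ)
    (hfc : Continuous f) (hCS : HasCompactSupport f)
    (hgc : Continuous g) (hgne : g ≠ 0)
    (id1 : ∀ x y : G, f (x * y) * g y = ∑ i, fi i x * gi i y)
    (H₀ : Subgroup G) (hH₀c : IsCompact (H₀ : Set G)) (hH₀o : IsOpen (H₀ : Set G)) :
    f ∈ PolyFun G := by
  classical
  obtain ⟨u, hu⟩ : ∃ u, g u ≠ 0 := by
    by_contra hc; push_neg at hc; exact hgne (funext hc)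
  have hUprop : ∀ y : G, g y ≠ 0 → ∀ x, f (x * y) = ∑ i, (gi i y / g y) * fi i x := by
    intro y hy x
    have h2 : (∑ i, (gi i y / g y) * fi i x) * g y = ∑ i, fi i x * gi i y := by
      rw [Finset.sum_mul]
      refine Finset.sum_congr rfl fun i _ => ?_
      field_simp
    apply mul_right_cancel₀ hy
    rw [id1 x y, ← h2]
  set O : G → Set G := fun k => (fun y => u⁻¹ * k * y) '' {y | g y ≠ 0} with hO
  have hUo : IsOpen {y : G | g y ≠ 0} := isOpen_compl_singleton.preimage hgc
  have hOopen : ∀ k, IsOpen (O k) := by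
    intro k
    exact (Homeomorph.mulLeft (u⁻¹ * k)).isOpenMap _ hUo
  have hcover : (H₀ : Set G) ⊆ ⋃ k : G, O k := by
    intro hh _
    refine Set.mem_iUnion.mpr ⟨u * hh * u⁻¹, ⟨u, hu, ?_⟩⟩
    show u⁻¹ * (u * hh * u⁻¹) * u = hh
    group
  obtain ⟨t, ht⟩ := hH₀c.elim_finite_subcover O hOopen hcover
  set D : Submodule ℂ (G → ℂ) :=
    Submodule.span ℂ (Set.range
      (fun p : (↥t × Fin m) => fun x : G => fi p.2 (x * (u⁻¹ * p.1.1)))) with hD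
  haveI hDfd : FiniteDimensional ℂ D := FiniteDimensional.span_of_finite ℂ (Set.finite_range _)
  set S : Set (G → ℂ) := {F | ∃ hh ∈ (H₀ : Set G), F = fun x => f (x * hh)} with hS
  set D' : Submodule ℂ (G → ℂ) := Submodule.span ℂ S with hD'
  have hD'le : D' ≤ D := by
    rw [hD', Submodule.span_le]
    rintro F ⟨hh, hhH, rfl⟩
    obtain ⟨k, hkt, y, hgy, hky⟩ : ∃ k ∈ t, ∃ y, g y ≠ 0 ∧ u⁻¹ * k * y = hh := by
      have h3 := ht hhH
      simp only [Set.mem_iUnion] at h3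
      obtain ⟨k, hkt, y, hy, hky⟩ := h3
      exact ⟨k, hkt, y, hy, hky⟩
    have hFeq : (fun x => f (x * hh))
        = ∑ i, (gi i y / g y) • (fun x : G => fi i (x * (u⁻¹ * k))) := by
      funext x
      rw [← hky]
      have h3 : x * (u⁻¹ * k * y) = (x * (u⁻¹ * k)) * y := by group
      rw [h3, hUprop y hgy (x * (u⁻¹ * k))]
      simp only [Finset.sum_apply, Pi.smul_apply, smul_eq_mul]
    rw [hFeq]
    exact Submodule.sum_mem _ fun i _ =>
      Submodule.smul_mem _ _ (Submodule.subset_span ⟨(⟨k, hkt⟩, i), rfl⟩)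
  haveI : FiniteDimensional ℂ D' := Submodule.finiteDimensional_of_le hD'le
  have hmem_nice : ∀ F ∈ D', Continuous F ∧ HasCompactSupport F := by
    intro F hF
    refine Submodule.span_induction ?_ ?_ ?_ ?_ hF
    · rintro F ⟨hh, _, rfl⟩
      refine ⟨hfc.comp (continuous_mul_right hh), ?_⟩
      exact hCS.comp_homeomorph (Homeomorph.mulRight hh)
    · refine ⟨continuous_const, ?_⟩
      have h0 : tsupport (0 : G → ℂ) = ∅ := by
        simp [tsupport]
      rw [HasCompactSupport, h0]
      exact isCompact_empty
    · intro F1 F2 _ _ h1 h2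
      exact ⟨h1.1.add h2.1, h1.2.add h2.2⟩
    · intro c F1 _ h1
      refine ⟨h1.1.const_smul c, ?_⟩
      have hsub : tsupport (c • F1) ⊆ tsupport F1 :=
        tsupport_smul_subset_right (fun _ => c) F1
      exact IsCompact.of_isClosed_subset h1.2 (isClosed_tsupport _) hsub
  set d := Module.finrank ℂ D' with hd
  set B : Module.Basis (Fin d) ℂ D' := Module.finBasis ℂ D' with hB
  obtain ⟨k, z, hsep⟩ := exists_sep_points D'
  set E : D' →ₗ[ℂ] (Fin k → ℂ) :=
    LinearMap.pi (fun l => (LinearMap.proj (z l)).comp D'.subtype) with hE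
  have hEapp : ∀ (v : D') l, E v l = (v : G → ℂ) (z l) := fun v l => rfl
  have hEinj : Function.Injective E := by
    intro v1 v2 h12
    have h3 : ((v1 - v2 : D') : G → ℂ) = 0 := by
      apply hsep _ (v1 - v2).2
      intro l
      have h4 : E v1 l = E v2 l := congrFun h12 l
      rw [hEapp, hEapp] at h4
      show ((v1 : G → ℂ) - (v2 : G → ℂ)) (z l) = 0
      simp [h4]
    apply Subtype.ext
    have h4 : (v1 : G → ℂ) - (v2 : G → ℂ) = 0 := h3
    exact sub_eq_zero.mp h4
  obtain ⟨Q, hQ⟩ := Submodule.exists_isCompl (LinearMap.range E)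
  set proj := (LinearMap.range E).linearProjOfIsCompl Q hQ with hproj
  set Einv := (LinearEquiv.ofInjective E hEinj).symm with hEinv
  set ψ : Fin d → (Fin k → ℂ) →ₗ[ℂ] ℂ :=
    fun i => (B.coord i).comp (Einv.toLinearMap.comp proj) with hψ
  have hψE : ∀ (i : Fin d) (v : D'), ψ i (E v) = B.coord i v := by
    intro i v
    have h1 : proj (E v) = ⟨E v, LinearMap.mem_range_self E v⟩ :=
      Submodule.linearProjOfIsCompl_apply_left hQ ⟨E v, LinearMap.mem_range_self E v⟩
    have h3 : (⟨E v, LinearMap.mem_range_self E v⟩ : LinearMap.range E)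
        = (LinearEquiv.ofInjective E hEinj) v := by
      apply Subtype.ext
      simp [LinearEquiv.ofInjective_apply]
    have h2 : Einv ⟨E v, LinearMap.mem_range_self E v⟩ = v := by
      rw [h3, hEinv]
      exact LinearEquiv.symm_apply_apply _ v
    show (B.coord i) (Einv (proj (E v))) = B.coord i v
    rw [h1, h2]
  refine ⟨hfc, hCS, H₀, hH₀c, hH₀o, d, fun i => (B i : G → ℂ),
    fun i hh => ψ i (fun l => f (z l * hh)), ?_, ?_, ?_⟩
  · intro i
    exact hmem_nice _ (B i).2
  · intro i
    have hc1 : Continuous (ψ i) := LinearMap.continuous_of_finiteDimensional _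
    exact hc1.comp (continuous_pi fun l => hfc.comp (continuous_const.mul continuous_subtype_val))
  · intro x hh
    have hThmem : (fun x' => f (x' * (hh : G))) ∈ D' :=
      Submodule.subset_span ⟨(hh : G), hh.2, rfl⟩
    set Th : D' := ⟨fun x' => f (x' * (hh : G)), hThmem⟩ with hTh
    have hev : (fun l => f (z l * hh)) = E Th := rfl
    have h6 := congrArg (fun (F : D') => (F : G → ℂ) x) (B.sum_repr Th)
    simp only [AddSubmonoidClass.coe_finset_sum, Finset.sum_apply, SetLike.val_smul,
      Pi.smul_apply, smul_eq_mul] at h6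
    show f (x * (hh : G)) = ∑ i, (B i : G → ℂ) x * ψ i (fun l => f (z l * hh))
    rw [show f (x * (hh : G)) = (Th : G → ℂ) x from rfl, ← h6]
    refine Finset.sum_congr rfl fun i _ => ?_
    rw [hev, hψE i Th, Module.Basis.coord_apply]
    ring

end Backward2

/-- Let `G` be a locally compact group with a compact open subgroup. Then `f ∈ P(G)` iff
`f ∈ C₀(G)` and there are nonzero `g, h ∈ C₀(G)` and finitely many nonzero functions
`fᵢ, gᵢ, f'ⱼ, g'ⱼ ∈ C₀(G)` such that `f(xy)·g(y) = ∑ᵢ fᵢ(x)·gᵢ(y)` and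
`f(y)·h(xy) = ∑ⱼ f'ⱼ(x)·g'ⱼ(y)` for all `x, y ∈ G`. -/
theorem mem_polyFun_iff_factorizations
    {G : Type*} [Group G] [TopologicalSpace G] [IsTopologicalGroup G]
    [LocallyCompactSpace G] [T2Space G]
    (hG : ∃ H : Subgroup G, IsCompact (H : Set G) ∧ IsOpen (H : Set G))
    (f : G → ℂ) :
    f ∈ PolyFun G ↔
      (Continuous f ∧ Tendsto f (cocompact G) (𝓝 0)) ∧
      ∃ (m n : ℕ) (g h : G → ℂ) (fi gi : Fin m → G → ℂ) (fj gj : Fin n → G → ℂ),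
        (Continuous g ∧ Tendsto g (cocompact G) (𝓝 0) ∧ g ≠ 0) ∧
        (Continuous h ∧ Tendsto h (cocompact G) (𝓝 0) ∧ h ≠ 0) ∧
        (∀ i, Continuous (fi i) ∧ Tendsto (fi i) (cocompact G) (𝓝 0) ∧ fi i ≠ 0) ∧
        (∀ i, Continuous (gi i) ∧ Tendsto (gi i) (cocompact G) (𝓝 0) ∧ gi i ≠ 0) ∧
        (∀ j, Continuous (fj j) ∧ Tendsto (fj j) (cocompact G) (𝓝 0) ∧ fj j ≠ 0) ∧
        (∀ j, Continuous (gj j) ∧ Tendsto (gj j) (cocompact G) (𝓝 0) ∧ gj j ≠ 0) ∧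
        (∀ x y : G, f (x * y) * g y = ∑ i, fi i x * gi i y) ∧
        (∀ x y : G, f y * h (x * y) = ∑ j, fj j x * gj j y) := by
  constructor
  · exact forward_direction f
  · rintro ⟨⟨hfc, -⟩, m, n, g, h, fi, gi, fj, gj, ⟨hgc, -, hgne⟩, ⟨-, hh0, hhne⟩,
      -, -, hfjP, -, id1, id2⟩
    obtain ⟨H₀, hH₀c, hH₀o⟩ := hG
    have hCS := backward_compact_support f h fj gj hh0 hhne
      (fun j => ⟨(hfjP j).1, (hfjP j).2.1⟩) id2
    exact backward_decomposition f g fi gi hfc hCS hgc hgne id1 H₀ hH₀c hH₀o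
end

section
/- Let G be a locally compact group. Call a function p : G → ℂ a group-like projection in C₀(G) if p ∈ C₀(G), p is nonzero, p(x) = conj(p(x)) and p(x)² = p(x) for all x, and p(xy)·p(x) = p(x)·p(y) = p(xy)·p(y) for all x, y ∈ G. Then G has a compact open subgroup if and only if C₀(G) contains a group-like projection; moreover, a function p is a group-like projection in C₀(G) if and only if p = χ_H, the indicator function of some compact open subgroup H of G. -/
open Filter Topology

/-- A group-like projection in `C₀(G)`: a nonzero, self-adjoint, idempotent
`p ∈ C₀(G)` with `p(xy)·p(x) = p(x)·p(y) = p(xy)·p(y)` for all `x, y`. -/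
def IsGroupLikeProjection {G : Type*} [Group G] [TopologicalSpace G] (p : G → ℂ) :
    Prop :=
  Continuous p ∧ Tendsto p (cocompact G) (𝓝 0) ∧ p ≠ 0 ∧
    (∀ x : G, (starRingEnd ℂ) (p x) = p x) ∧
    (∀ x : G, p x ^ 2 = p x) ∧
    (∀ x y : G, p (x * y) * p x = p x * p y) ∧
    (∀ x y : G, p (x * y) * p y = p x * p y)

open scoped Classical in
lemma indicator_isGLP {G : Type*} [Group G] [TopologicalSpace G] [IsTopologicalGroup G]
    [T2Space G] (H : Subgroup G) (hc : IsCompact (H : Set G)) (ho : IsOpen (H : Set G)) :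
    IsGroupLikeProjection (fun x => if x ∈ H then (1 : ℂ) else 0) := by
  have hclosed : IsClosed (H : Set G) := H.isClosed_of_isOpen ho
  refine ⟨?_, ?_, ?_, ?_, ?_, ?_, ?_⟩
  · apply Continuous.if
    · intro a ha
      have : frontier ((H : Set G)) = ∅ := (IsClopen.frontier_eq ⟨hclosed, ho⟩)
      have ha' : a ∈ frontier (H : Set G) := ha
      rw [this] at ha'; exact absurd ha' (Set.notMem_empty a)
    · exact continuous_const
    · exact continuous_const
  · refine Tendsto.congr' ?_ tendsto_const_nhds
    filter_upwards [hc.compl_mem_cocompact] with x hx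
    simp only [Set.mem_compl_iff, SetLike.mem_coe] at hx
    simp [hx]
  · intro h
    have := congrFun h 1
    simp [H.one_mem] at this
  · intro x; dsimp only; split <;> simp
  · intro x; dsimp only; split <;> simp
  · intro x y
    dsimp only
    by_cases hx : x ∈ H
    · by_cases hy : y ∈ H
      · simp [hx, hy, H.mul_mem hx hy]
      · have : x * y ∉ H := fun h => hy (by simpa using H.mul_mem (H.inv_mem hx) h)
        simp [hx, hy, this]
    · simp [hx]
  · intro x y
    dsimp only
    by_cases hy : y ∈ H
    · by_cases hx : x ∈ H
      · simp [hx, hy, H.mul_mem hx hy]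
      · have : x * y ∉ H := fun h => hx (by simpa using H.mul_mem h (H.inv_mem hy))
        simp [hx, hy, this]
    · simp [hy]

open scoped Classical in
lemma glp_eq_indicator {G : Type*} [Group G] [TopologicalSpace G] [IsTopologicalGroup G]
    [T2Space G] {p : G → ℂ} (hp : IsGroupLikeProjection p) :
    ∃ H : Subgroup G, IsCompact (H : Set G) ∧ IsOpen (H : Set G) ∧
      p = fun x => if x ∈ H then (1 : ℂ) else 0 := by
  obtain ⟨h1, h2, h3, h4, h5, h6, h7⟩ := hp
  have hv : ∀ x, p x = 0 ∨ p x = 1 := by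
    intro x
    have h : p x * (p x - 1) = 0 := by linear_combination (h5 x)
    rcases mul_eq_zero.1 h with h | h
    · exact Or.inl h
    · exact Or.inr (sub_eq_zero.1 h)
  -- values 0/1, get a point where p = 1
  obtain ⟨a, ha⟩ := Function.ne_iff.1 h3
  have ha1 : p a = 1 := (hv a).resolve_left (by simpa using ha)
  -- p x = 1 is closed under products
  have hmul : ∀ {x y}, p x = 1 → p y = 1 → p (x * y) = 1 := by
    intro x y hx hy
    have := h6 x y
    rw [hx, hy] at this; simpa using this
  -- inverses
  have hinv : ∀ {x}, p x = 1 → p x⁻¹ = 1 := by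
    intro x hx
    have hxx : p (x * x) = 1 := hmul hx hx
    have := h6 (x * x) x⁻¹
    rw [hxx, mul_inv_cancel_right] at this
    rw [hx] at this; simpa using this.symm
  have h1mem : p 1 = 1 := by
    have := h6 a a⁻¹
    rw [mul_inv_cancel, ha1, hinv ha1] at this
    simpa using this
  set H : Subgroup G :=
    { carrier := {x | p x = 1}
      one_mem' := h1mem
      mul_mem' := fun hx hy => hmul hx hy
      inv_mem' := fun hx => hinv hx } with hH
  have hmemH : ∀ x, x ∈ H ↔ p x = 1 := fun x => Iff.rfl
  have hset : (H : Set G) = p ⁻¹' {1} := rfl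
  have hset' : (H : Set G) = p ⁻¹' ({0}ᶜ) := by
    ext x
    simp only [hset, Set.mem_preimage, Set.mem_singleton_iff, Set.mem_compl_iff]
    constructor
    · intro h; rw [h]; norm_num
    · intro h; exact (hv x).resolve_left h
  have hopen : IsOpen (H : Set G) := by
    rw [hset']; exact (isOpen_compl_singleton).preimage h1
  have hclosed : IsClosed (H : Set G) := by
    rw [hset]; exact isClosed_singleton.preimage h1
  have hcomp : IsCompact (H : Set G) := by
    have hball : Metric.ball (0 : ℂ) (1/2) ∈ 𝓝 (0 : ℂ) := Metric.ball_mem_nhds _ (by norm_num)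
    have := h2 hball
    rw [mem_map, mem_cocompact] at this
    obtain ⟨K, hK, hKsub⟩ := this
    refine hK.of_isClosed_subset hclosed ?_
    intro x hx
    by_contra hxK
    have : p x ∈ Metric.ball (0 : ℂ) (1/2) := hKsub hxK
    rw [(hmemH x).1 hx] at this
    simp [Metric.mem_ball] at this
    norm_num at this
  refine ⟨H, hcomp, hopen, ?_⟩
  funext x
  rcases hv x with h | h
  · have : x ∉ H := by rw [hmemH]; rw [h]; norm_num
    simp [this, h]
  · have : x ∈ H := (hmemH x).2 h
    simp [this, h]

open scoped Classical in
/-- `G` has a compact open subgroup iff `C₀(G)` contains a group-like projection;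
moreover the group-like projections in `C₀(G)` are exactly the indicator functions of
compact open subgroups. -/
theorem groupLikeProjection_iff_compact_open_subgroup
    {G : Type*} [Group G] [TopologicalSpace G] [IsTopologicalGroup G]
    [LocallyCompactSpace G] [T2Space G] :
    ((∃ H : Subgroup G, IsCompact (H : Set G) ∧ IsOpen (H : Set G)) ↔
      ∃ p : G → ℂ, IsGroupLikeProjection p) ∧
    (∀ p : G → ℂ, IsGroupLikeProjection p ↔
      ∃ H : Subgroup G, IsCompact (H : Set G) ∧ IsOpen (H : Set G) ∧
        p = fun x => if x ∈ H then (1 : ℂ) else 0) := by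
  constructor
  · constructor
    · rintro ⟨H, hc, ho⟩
      exact ⟨_, indicator_isGLP H hc ho⟩
    · rintro ⟨p, hp⟩
      obtain ⟨H, hc, ho, -⟩ := glp_eq_indicator hp
      exact ⟨H, hc, ho⟩
  · intro p
    constructor
    · exact glp_eq_indicator
    · rintro ⟨H, hc, ho, rfl⟩
      exact indicator_isGLP H hc ho
end
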